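/- arXiv:1501.03694 — 9 statements merged into one kernel-verified Lean document; each statement's English description precedes it below -/
import Mathlib

section
/- Let d ∈ (0, 1/2) and t ∈ ℝ. Then the Mandelbrot–van Ness kernel function s ↦ (max(t−s,0))^d − (max(−s,0))^d belongs to L²(ℝ) with respect to Lebesgue measure. -/
open MeasureTheory Set

lemma rpow_sub_rpow_le (d : ℝ) (hd0 : 0 < d) (hd1 : d < 1) {x y : ℝ}
    (hy : 0 < y) (hxy : y ≤ x) :
    x ^ d - y ^ d ≤ d * y ^ (d - 1) * (x - y) := by
  rcases eq_or_lt_of_le hxy with rfl | h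
  · simp
  obtain ⟨c, hc, hceq⟩ := exists_hasDerivAt_eq_slope (fun z => z ^ d)
      (fun z => d * z ^ (d - 1)) h
      (fun z hz => (Real.continuousAt_rpow_const z d
        (Or.inl (ne_of_gt (lt_of_lt_of_le hy hz.1)))).continuousWithinAt)
      (fun z hz => Real.hasDerivAt_rpow_const (Or.inl (ne_of_gt (lt_trans hy hz.1))))
  have hcy : y < c := hc.1
  have heq : x ^ d - y ^ d = d * c ^ (d - 1) * (x - y) := by
    rw [eq_comm, div_eq_iff (by linarith : x - y ≠ 0)] at hceq
    linarith [hceq]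
  rw [heq]
  have hcle : c ^ (d - 1) ≤ y ^ (d - 1) :=
    Real.rpow_le_rpow_of_nonpos hy hcy.le (by linarith)
  have hxy0 : (0:ℝ) ≤ x - y := by linarith
  exact mul_le_mul_of_nonneg_right (mul_le_mul_of_nonneg_left hcle hd0.le) hxy0

lemma abs_rpow_sub_rpow_le (d : ℝ) (hd0 : 0 < d) (hd1 : d < 1) {x y : ℝ}
    (hx : 0 < x) (hy : 0 < y) :
    |x ^ d - y ^ d| ≤ d * (min x y) ^ (d - 1) * |x - y| := by
  rcases le_total y x with h | h
  · rw [min_eq_right h,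
      abs_of_nonneg (sub_nonneg.2 (Real.rpow_le_rpow hy.le h hd0.le)),
      abs_of_nonneg (sub_nonneg.2 h)]
    exact rpow_sub_rpow_le d hd0 hd1 hy h
  · rw [min_eq_left h, abs_sub_comm, abs_sub_comm x y,
      abs_of_nonneg (sub_nonneg.2 (Real.rpow_le_rpow hx.le h hd0.le)),
      abs_of_nonneg (sub_nonneg.2 h)]
    exact rpow_sub_rpow_le d hd0 hd1 hx h

/-- For `d ∈ (0, 1/2)` and `t ∈ ℝ`, the Mandelbrot–van Ness kernel
`s ↦ (max (t - s) 0) ^ d - (max (-s) 0) ^ d` is in `L²(ℝ)` w.r.t. Lebesgue measure. -/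
theorem mvn_kernel_memL2_of_pos (d t : ℝ) (hd : d ∈ Set.Ioo (0 : ℝ) (1 / 2)) :
    MemLp (fun s : ℝ => (max (t - s) 0) ^ d - (max (-s) 0) ^ d) 2 volume := by
  obtain ⟨hd0, hd2⟩ := hd
  have hd1 : d < 1 := by linarith
  set f : ℝ → ℝ := fun s : ℝ => (max (t - s) 0) ^ d - (max (-s) 0) ^ d with hf
  set A : ℝ := min t 0 with hA
  set B : ℝ := max t 0 with hB
  have hA0 : A ≤ 0 := min_le_right _ _
  have hAt : A ≤ t := min_le_left _ _
  have hB0 : 0 ≤ B := le_max_right _ _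
  have htB : t ≤ B := le_max_left _ _
  have htA : t - A ≤ |t| := by
    rcases le_total t 0 with h | h
    · simp [hA, min_eq_left h]
    · simp [hA, min_eq_right h, abs_of_nonneg h]
  have hnA : -A ≤ |t| := by
    rcases le_total t 0 with h | h
    · simp [hA, min_eq_left h, abs_of_nonpos h]
    · simp [hA, min_eq_right h]
  -- continuity
  have hrc : Continuous fun x : ℝ => x ^ d :=
    continuous_iff_continuousAt.2 fun x => Real.continuousAt_rpow_const x d (Or.inr hd0.le)
  have hcont : Continuous f := by
    apply Continuous.sub
    · exact hrc.comp (((continuous_const.sub continuous_id)).max continuous_const)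
    · exact hrc.comp ((continuous_neg).max continuous_const)
  have hmeas : AEStronglyMeasurable f volume := hcont.aestronglyMeasurable
  -- decompose
  rw [← Set.indicator_self_add_compl (Set.Iio (A - 1)) f]
  apply MemLp.add
  · -- tail piece
    rw [memLp_indicator_iff_restrict measurableSet_Iio]
    set g : ℝ → ℝ := fun s => d * (A - s) ^ (d - 1) * |t| with hg
    have hgm : AEStronglyMeasurable g (volume.restrict (Set.Iio (A - 1))) := by
      apply Measurable.aestronglyMeasurable
      exact (measurable_const.mul ((measurable_const.sub measurable_id).pow_const _)).mul
        measurable_const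
    have hgsq : IntegrableOn (fun s => g s ^ 2) (Set.Iio (A - 1)) volume := by
      have base : IntegrableOn (fun x : ℝ => x ^ (2 * d - 2)) (Set.Ioi (1:ℝ)) volume :=
        integrableOn_Ioi_rpow_of_lt (by linarith) one_pos
      have mp : MeasurePreserving (fun x : ℝ => A - x) volume volume :=
        Measure.measurePreserving_sub_left volume A
      have emb : MeasurableEmbedding (fun x : ℝ => A - x) :=
        (MeasurableEquiv.subLeft A).measurableEmbedding
      have hpre : (fun x : ℝ => A - x) ⁻¹' (Set.Ioi 1) = Set.Iio (A - 1) := by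
        ext x
        simp only [Set.mem_preimage, Set.mem_Ioi, Set.mem_Iio]
        constructor <;> intro h <;> linarith
      have h1 : IntegrableOn ((fun x : ℝ => x ^ (2 * d - 2)) ∘ (fun x : ℝ => A - x))
          (Set.Iio (A - 1)) volume := by
        rw [← hpre]
        exact (mp.integrableOn_comp_preimage emb).mpr base
      have h2 : IntegrableOn (fun s : ℝ => (d^2 * |t|^2) * (A - s) ^ (2 * d - 2))
          (Set.Iio (A - 1)) volume := h1.const_mul _
      apply h2.congr_fun _ measurableSet_Iio
      intro s hs
      have hAs : (0:ℝ) ≤ A - s := by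
        simp only [Set.mem_Iio] at hs; linarith
      have : ((A - s) ^ (d - 1)) ^ (2:ℕ) = (A - s) ^ (2 * d - 2) := by
        rw [← Real.rpow_natCast ((A - s) ^ (d - 1)) 2, ← Real.rpow_mul hAs]
        norm_num
        ring_nf
      simp only [hg, mul_pow, this]
      ring
    have hgmem : MemLp g 2 (volume.restrict (Set.Iio (A - 1))) :=
      (memLp_two_iff_integrable_sq hgm).2 hgsq
    apply MemLp.of_le hgmem (hmeas.restrict)
    rw [ae_restrict_iff' measurableSet_Iio]
    filter_upwards with s hs
    simp only [Set.mem_Iio] at hs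
    have hts : 0 < t - s := by linarith
    have hns : 0 < -s := by linarith
    have hm1 : max (t - s) 0 = t - s := max_eq_left hts.le
    have hm2 : max (-s) 0 = -s := max_eq_left hns.le
    have hmin : min (t - s) (-s) = A - s := by
      rw [hA, ← min_sub_sub_right]
      norm_num
    have key := abs_rpow_sub_rpow_le d hd0 hd1 hts hns
    rw [hmin] at key
    have habs : |t - s - -s| = |t| := by congr 1; ring
    rw [habs] at key
    have hgnn : 0 ≤ g s := by
      have : (0:ℝ) ≤ (A - s) ^ (d - 1) := Real.rpow_nonneg (by linarith) _
      positivity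
    simp only [hf, Real.norm_eq_abs, hm1, hm2, abs_of_nonneg hgnn]
    exact key
  · -- middle piece
    have heq : (Set.Iio (A - 1))ᶜ.indicator f = (Set.Icc (A - 1) B).indicator f := by
      funext s
      rw [Set.compl_Iio]
      by_cases h1 : A - 1 ≤ s
      · by_cases h2 : s ≤ B
        · rw [Set.indicator_of_mem (Set.mem_Ici.2 h1), Set.indicator_of_mem (Set.mem_Icc.2 ⟨h1, h2⟩)]
        · push_neg at h2
          rw [Set.indicator_of_mem (Set.mem_Ici.2 h1),
            Set.indicator_of_notMem (by simp [Set.mem_Icc]; intro; linarith)]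
          have hz1 : max (t - s) 0 = 0 := max_eq_right (by linarith)
          have hz2 : max (-s) 0 = 0 := max_eq_right (by linarith)
          simp [hf, hz1, hz2, Real.zero_rpow hd0.ne']
      · rw [Set.indicator_of_notMem (by simpa using h1),
          Set.indicator_of_notMem (by simp [Set.mem_Icc]; intro; linarith)]
    rw [heq, memLp_indicator_iff_restrict measurableSet_Icc]
    haveI : IsFiniteMeasure (volume.restrict (Set.Icc (A - 1) B)) := by
      constructor
      rw [Measure.restrict_apply_univ]
      exact measure_Icc_lt_top
    apply MemLp.of_bound hmeas.restrict (2 * (|t| + 1) ^ d)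
    rw [ae_restrict_iff' measurableSet_Icc]
    filter_upwards with s hs
    obtain ⟨hs1, hs2⟩ := hs
    have hb1 : max (t - s) 0 ≤ |t| + 1 := by
      apply max_le _ (by positivity)
      linarith
    have hb2 : max (-s) 0 ≤ |t| + 1 := by
      apply max_le _ (by positivity)
      linarith
    have hp1 : (max (t - s) 0) ^ d ≤ (|t| + 1) ^ d :=
      Real.rpow_le_rpow (le_max_right _ _) hb1 hd0.le
    have hp2 : (max (-s) 0) ^ d ≤ (|t| + 1) ^ d :=
      Real.rpow_le_rpow (le_max_right _ _) hb2 hd0.le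
    have hn1 : 0 ≤ (max (t - s) 0) ^ d := Real.rpow_nonneg (le_max_right _ _) _
    have hn2 : 0 ≤ (max (-s) 0) ^ d := Real.rpow_nonneg (le_max_right _ _) _
    rw [Real.norm_eq_abs, hf]
    rw [abs_sub_le_iff]
    constructor <;> nlinarith [Real.rpow_nonneg (by positivity : (0:ℝ) ≤ |t| + 1) d]
end

section
/- Let d ∈ (−1/2, 0) and t ∈ ℝ. Then the Mandelbrot–van Ness kernel function s ↦ (max(t−s,0))^d − (max(−s,0))^d belongs to both L¹(ℝ) and L²(ℝ) with respect to Lebesgue measure. -/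
open MeasureTheory Set Real

/-- Tail integrability: `s ↦ (-s) ^ r` is integrable on `(-∞, -1)` when `r < -1`. -/
lemma mvn_tail_int {r : ℝ} (hr : r < -1) :
    IntegrableOn (fun s : ℝ => (-s) ^ r) (Iio (-1 : ℝ)) volume := by
  have h1 : IntegrableOn (fun x : ℝ => x ^ r) (Ioi 1) volume :=
    integrableOn_Ioi_rpow_of_lt hr one_pos
  have h2 : Integrable ((Ioi (1 : ℝ)).indicator fun x : ℝ => x ^ r) volume :=
    (integrable_indicator_iff measurableSet_Ioi).2 h1
  have h3 := h2.comp_neg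
  have h4 : (fun t : ℝ => (Ioi (1 : ℝ)).indicator (fun x : ℝ => x ^ r) (-t))
      = (Iio (-1 : ℝ)).indicator (fun s : ℝ => (-s) ^ r) := by
    funext u
    by_cases hu : u < -1
    · rw [indicator_of_mem (by simp only [mem_Ioi]; linarith) (fun x : ℝ => x ^ r),
        indicator_of_mem (by simpa using hu)]
    · rw [indicator_of_notMem (by simp only [mem_Ioi]; push_neg; linarith [not_lt.mp hu]),
        indicator_of_notMem (by simpa using hu)]
  rw [h4] at h3
  exact (integrable_indicator_iff measurableSet_Iio).1 h3

/-- Middle integrability: `s ↦ (max (a - s) 0) ^ r` is integrable on `[b, ∞)`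
when `-1 < r`, `r ≠ 0`, `b < a`. -/
lemma mvn_middle_int {r a b : ℝ} (hr1 : -1 < r) (hr0 : r ≠ 0) (hab : b < a) :
    IntegrableOn (fun s : ℝ => (max (a - s) 0) ^ r) (Ici b) volume := by
  have key : IntegrableOn (fun s : ℝ => (a - s) ^ r) (Ioo b a) volume := by
    have h := (intervalIntegral.intervalIntegrable_rpow' (a := 0) (b := a - b) hr1).comp_sub_left a
    simp only [sub_zero, sub_sub_cancel] at h
    have h' := h.symm
    rwa [intervalIntegrable_iff_integrableOn_Ioo_of_le hab.le] at h'
  have h1 : IntegrableOn (fun s : ℝ => (max (a - s) 0) ^ r) (Ico b a) volume := by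
    rw [integrableOn_Ico_iff_integrableOn_Ioo]
    refine key.congr_fun (fun s hs => ?_) measurableSet_Ioo
    rw [max_eq_left (by linarith [hs.2] : (0 : ℝ) ≤ a - s)]
  have h2 : IntegrableOn (fun s : ℝ => (max (a - s) 0) ^ r) (Ici a) volume := by
    refine (integrable_zero _ _ _).integrableOn.congr_fun (fun s hs => ?_) measurableSet_Ici
    have : max (a - s) 0 = 0 := max_eq_right (by simp only [mem_Ici] at hs; linarith)
    simp [this, Real.zero_rpow hr0]
  have := h1.union h2
  rwa [Ico_union_Ici_eq_Ici hab.le] at this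

/-- Tail pointwise bound via Bernoulli's inequality. -/
lemma mvn_tail_bound {d : ℝ} (hd1 : -1 ≤ d) (hd0 : d < 0) {t : ℝ} (ht : 0 ≤ t) {s : ℝ}
    (hs : s ≤ -1) :
    |(max (t - s) 0) ^ d - (max (-s) 0) ^ d| ≤ -d * t * (-s) ^ (d - 1) := by
  set x : ℝ := -s with hx
  have hx1 : 1 ≤ x := by rw [hx]; linarith
  have hx0 : 0 < x := by linarith
  have hm1 : max (t - s) 0 = x + t := by
    have h' : t - s = x + t := by rw [hx]; ring
    rw [h']; exact max_eq_left (by linarith)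
  have hm2 : max (-s) 0 = x := max_eq_left (by linarith)
  rw [hm1, hm2]
  have hxt0 : 0 < x + t := by linarith
  have hle : (x + t) ^ d ≤ x ^ d := Real.rpow_le_rpow_of_nonpos hx0 (by linarith) hd0.le
  rw [abs_sub_comm, abs_of_nonneg (by linarith)]
  set e : ℝ := -d with he
  have he0 : 0 < e := by rw [he]; linarith
  have he1 : e ≤ 1 := by rw [he]; linarith
  have hA : 0 < x ^ e := Real.rpow_pos_of_pos hx0 _
  have hB : 0 < (x + t) ^ e := Real.rpow_pos_of_pos hxt0 _
  -- Bernoulli : (x+t)^e ≤ x^e + e * t * x^(e-1)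
  have hbern : (x + t) ^ e ≤ x ^ e + e * t * x ^ (e - 1) := by
    have hu0 : 0 ≤ t / x := div_nonneg ht hx0.le
    have hb := rpow_one_add_le_one_add_mul_self (s := t / x) (by linarith) he0.le he1
    have hxe : x + t = x * (1 + t / x) := by field_simp
    calc (x + t) ^ e = x ^ e * (1 + t / x) ^ e := by
          rw [hxe, Real.mul_rpow hx0.le (by linarith)]
      _ ≤ x ^ e * (1 + e * (t / x)) := by
          exact mul_le_mul_of_nonneg_left hb hA.le
      _ = x ^ e + e * t * x ^ (e - 1) := by
          rw [Real.rpow_sub hx0, Real.rpow_one]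
          field_simp
  have hrepr : x ^ d - (x + t) ^ d = ((x + t) ^ e - x ^ e) / (x ^ e * (x + t) ^ e) := by
    have hde : d = -e := by rw [he]; ring
    have hxd : x ^ d = (x ^ e)⁻¹ := by rw [hde, Real.rpow_neg hx0.le]
    have hxtd : (x + t) ^ d = ((x + t) ^ e)⁻¹ := by rw [hde, Real.rpow_neg hxt0.le]
    rw [hxd, hxtd]
    field_simp
  rw [hrepr]
  have hstep : ((x + t) ^ e - x ^ e) / (x ^ e * (x + t) ^ e)
      ≤ (e * t * x ^ (e - 1)) / (x ^ e * x ^ e) := by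
    refine div_le_div₀ (mul_nonneg (mul_nonneg he0.le ht) (Real.rpow_pos_of_pos hx0 _).le)
      (by linarith [hbern]) (mul_pos hA hA) ?_
    exact mul_le_mul_of_nonneg_left (Real.rpow_le_rpow hx0.le (by linarith) he0.le) hA.le
  refine hstep.trans (le_of_eq ?_)
  rw [← Real.rpow_add hx0 e e, mul_div_assoc, ← Real.rpow_sub hx0]
  have : e - 1 - (e + e) = d - 1 := by rw [he]; ring
  rw [this, he]

/-- Main lemma for nonnegative `t`. -/
lemma mvn_aux (d t : ℝ) (hd : d ∈ Set.Ioo (-(1 / 2) : ℝ) 0) (ht : 0 ≤ t) :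
    MemLp (fun s : ℝ => (max (t - s) 0) ^ d - (max (-s) 0) ^ d) 1 volume ∧
    MemLp (fun s : ℝ => (max (t - s) 0) ^ d - (max (-s) 0) ^ d) 2 volume := by
  obtain ⟨hd1, hd2⟩ := hd
  set F : ℝ → ℝ := fun s : ℝ => (max (t - s) 0) ^ d - (max (-s) 0) ^ d with hF
  have meas1 : Measurable fun s : ℝ => (max (t - s) 0) ^ d :=
    ((measurable_const.sub measurable_id).max measurable_const).pow measurable_const
  have meas2 : Measurable fun s : ℝ => (max (-s) 0) ^ d :=
    (measurable_neg.max measurable_const).pow measurable_const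
  have hmeas : Measurable F := meas1.sub meas2
  -- tail bound as a.e. statement
  have hbound : ∀ s ∈ Iio (-1 : ℝ), |F s| ≤ -d * t * (-s) ^ (d - 1) := fun s hs =>
    mvn_tail_bound (by linarith) hd2 ht (le_of_lt hs)
  -- L¹ tail
  have htail1 : IntegrableOn F (Iio (-1 : ℝ)) volume := by
    refine Integrable.mono' ((mvn_tail_int (r := d - 1) (by linarith)).const_mul (-d * t))
      hmeas.aestronglyMeasurable.restrict ?_
    rw [ae_restrict_iff' measurableSet_Iio]
    exact Filter.Eventually.of_forall fun s hs => by
      simpa [Real.norm_eq_abs, mul_assoc] using hbound s hs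
  -- L² tail
  have htail2 : IntegrableOn (fun s => F s ^ 2) (Iio (-1 : ℝ)) volume := by
    refine Integrable.mono'
      (((mvn_tail_int (r := (d - 1) * 2) (by linarith)).const_mul ((-d * t) ^ 2)))
      ((hmeas.pow_const 2).aestronglyMeasurable.restrict) ?_
    rw [ae_restrict_iff' measurableSet_Iio]
    refine Filter.Eventually.of_forall fun s hs => ?_
    have h0s : (0 : ℝ) ≤ -s := by simp only [mem_Iio] at hs; linarith
    have : |F s| ^ 2 ≤ (-d * t * (-s) ^ (d - 1)) ^ 2 :=
      pow_le_pow_left₀ (abs_nonneg _) (hbound s hs) 2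
    calc ‖F s ^ 2‖ = |F s| ^ 2 := by rw [Real.norm_eq_abs, abs_pow, sq_abs]
      _ ≤ (-d * t * (-s) ^ (d - 1)) ^ 2 := this
      _ = (-d * t) ^ 2 * ((-s) ^ ((d - 1) * 2)) := by
          rw [mul_pow, Real.rpow_mul h0s, Real.rpow_two]
  -- middle pieces
  have hmt : (-1 : ℝ) < t := by linarith
  have hm0 : (-1 : ℝ) < 0 := by norm_num
  have mid1a : IntegrableOn (fun s : ℝ => (max (t - s) 0) ^ d) (Ici (-1 : ℝ)) volume :=
    mvn_middle_int (by linarith) hd2.ne hmt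
  have mid1b : IntegrableOn (fun s : ℝ => (max (-s) 0) ^ d) (Ici (-1 : ℝ)) volume := by
    have := mvn_middle_int (r := d) (a := 0) (b := -1) (by linarith) hd2.ne hm0
    simpa using this
  have hmid1 : IntegrableOn F (Ici (-1 : ℝ)) volume := mid1a.sub mid1b
  -- middle L²
  have mid2a : IntegrableOn (fun s : ℝ => ((max (t - s) 0) ^ d) ^ 2) (Ici (-1 : ℝ)) volume := by
    have h := mvn_middle_int (r := d * 2) (a := t) (b := -1) (by linarith)
      (by intro h; nlinarith) hmt
    refine h.congr_fun (fun s _ => ?_) measurableSet_Ici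
    beta_reduce
    rw [Real.rpow_mul (le_max_right _ _), Real.rpow_two]
  have mid2b : IntegrableOn (fun s : ℝ => ((max (-s) 0) ^ d) ^ 2) (Ici (-1 : ℝ)) volume := by
    have h := mvn_middle_int (r := d * 2) (a := 0) (b := -1) (by linarith)
      (by intro h; nlinarith) hm0
    refine h.congr_fun (fun s _ => ?_) measurableSet_Ici
    beta_reduce
    rw [zero_sub, Real.rpow_mul (le_max_right _ _), Real.rpow_two]
  have M1 : MemLp (fun s : ℝ => (max (t - s) 0) ^ d) 2 (volume.restrict (Ici (-1 : ℝ))) :=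
    (memLp_two_iff_integrable_sq meas1.aestronglyMeasurable.restrict).2 mid2a
  have M2 : MemLp (fun s : ℝ => (max (-s) 0) ^ d) 2 (volume.restrict (Ici (-1 : ℝ))) :=
    (memLp_two_iff_integrable_sq meas2.aestronglyMeasurable.restrict).2 mid2b
  have hmid2 : IntegrableOn (fun s => F s ^ 2) (Ici (-1 : ℝ)) volume :=
    (memLp_two_iff_integrable_sq hmeas.aestronglyMeasurable.restrict).1 (M1.sub M2)
  -- combine
  have Int1 : Integrable F volume := by
    rw [← integrableOn_univ, ← Set.Iio_union_Ici (a := (-1 : ℝ))]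
    exact htail1.union hmid1
  have Int2 : Integrable (fun s => F s ^ 2) volume := by
    rw [← integrableOn_univ, ← Set.Iio_union_Ici (a := (-1 : ℝ))]
    exact htail2.union hmid2
  exact ⟨memLp_one_iff_integrable.2 Int1,
    (memLp_two_iff_integrable_sq hmeas.aestronglyMeasurable).2 Int2⟩

/-- For `d ∈ (-1/2, 0)` and `t ∈ ℝ`, the Mandelbrot–van Ness kernel
`s ↦ (max (t - s) 0) ^ d - (max (-s) 0) ^ d` is in `L¹(ℝ) ∩ L²(ℝ)`. -/
theorem mvn_kernel_memL1_memL2_of_neg (d t : ℝ) (hd : d ∈ Set.Ioo (-(1 / 2) : ℝ) 0) :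
    MemLp (fun s : ℝ => (max (t - s) 0) ^ d - (max (-s) 0) ^ d) 1 volume ∧
    MemLp (fun s : ℝ => (max (t - s) 0) ^ d - (max (-s) 0) ^ d) 2 volume := by
  rcases le_or_gt 0 t with ht | ht
  · exact mvn_aux d t hd ht
  · -- reduce to the case of `-t ≥ 0` via `f_t(u) = -(f_{-t}((-t) + u))`
    have haux := mvn_aux d (-t) hd (by linarith)
    have key : ∀ p : ENNReal,
        MemLp (fun s : ℝ => (max (-t - s) 0) ^ d - (max (-s) 0) ^ d) p volume →
        MemLp (fun s : ℝ => (max (t - s) 0) ^ d - (max (-s) 0) ^ d) p volume := by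
      intro p hG
      set G : ℝ → ℝ := fun s : ℝ => (max (-t - s) 0) ^ d - (max (-s) 0) ^ d with hGdef
      have hmap : Measure.map (fun u : ℝ => -t + u) volume = volume :=
        map_add_left_eq_self volume (-t)
      have hG' : MemLp G p (Measure.map (fun u : ℝ => -t + u) volume) := by
        rw [hmap]; exact hG
      have hcomp : MemLp (G ∘ fun u : ℝ => -t + u) p volume := by
        refine (memLp_map_measure_iff ?_ (measurable_const_add (-t)).aemeasurable).1 hG'
        rw [hmap]; exact hG.aestronglyMeasurable
      have hneg := hcomp.neg
      have heq : (-(G ∘ fun u : ℝ => -t + u))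
          = fun s : ℝ => (max (t - s) 0) ^ d - (max (-s) 0) ^ d := by
        funext u
        simp only [Pi.neg_apply, Function.comp_apply, hGdef]
        have e1 : -t - (-t + u) = -u := by ring
        have e2 : -(-t + u) = t - u := by ring
        rw [e1, e2]
        ring
      rwa [heq] at hneg
    exact ⟨key 1 haux.1, key 2 haux.2⟩
end

section
/- Let a > 0 and d < 0. For every fixed t ∈ ℝ, the limit lim_{s→−∞} f_{a,d}(t,s) / |s|^{d−1} = −d·t holds; in particular |f_{a,d}(t,s)| is asymptotically equivalent to |d t|·|s|^{d−1} as s → −∞. -/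
open MeasureTheory Filter

/-- The modified Mandelbrot–van Ness kernel
`f_{a,d}(t,s) = (a + max(-s,0))^d - (a + max(t-s,0))^d`. -/
noncomputable def modMvN (a d t s : ℝ) : ℝ :=
  (a + max (-s) 0) ^ d - (a + max (t - s) 0) ^ d

/-- For `a > 0`, `d < 0` and fixed `t ∈ ℝ`,
`lim_{s → -∞} f_{a,d}(t,s) / |s|^(d-1) = -d * t`; in particular (for `t ≠ 0`)
`|f_{a,d}(t,s)|` is asymptotically equivalent to `|d * t| * |s|^(d-1)` as `s → -∞`. -/
theorem modMvN_asymptotic (a d t : ℝ) (ha : 0 < a) (hd : d < 0) :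
    Tendsto (fun s : ℝ => modMvN a d t s / |s| ^ (d - 1)) atBot (nhds (-d * t)) ∧
    (t ≠ 0 →
      Tendsto (fun s : ℝ => |modMvN a d t s| / (|d * t| * |s| ^ (d - 1))) atBot (nhds 1)) := by
  set h : ℝ → ℝ := fun u => (1 + a * u) ^ d - (1 + (a + t) * u) ^ d with hh
  have hderiv : HasDerivAt h (-d * t) 0 := by
    have inner1 : HasDerivAt (fun u : ℝ => 1 + a * u) a 0 := by
      simpa using ((hasDerivAt_id (0:ℝ)).const_mul a).const_add 1
    have inner2 : HasDerivAt (fun u : ℝ => 1 + (a + t) * u) (a + t) 0 := by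
      simpa using ((hasDerivAt_id (0:ℝ)).const_mul (a + t)).const_add 1
    have outer1 := Real.hasDerivAt_rpow_const (x := 1 + a * 0) (p := d)
      (Or.inl (by norm_num))
    have outer2 := Real.hasDerivAt_rpow_const (x := 1 + (a + t) * 0) (p := d)
      (Or.inl (by norm_num))
    have h1 := outer1.comp 0 inner1
    have h2 := outer2.comp 0 inner2
    have := h1.sub h2
    have e : d * (1 + a * 0) ^ (d - 1) * a - d * (1 + (a + t) * 0) ^ (d - 1) * (a + t)
        = -d * t := by
      simp [Real.one_rpow]; ring
    rw [e] at this
    exact this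
  have hslope : Tendsto (slope h 0) (nhdsWithin 0 {(0:ℝ)}ᶜ) (nhds (-d * t)) :=
    hasDerivAt_iff_tendsto_slope.mp hderiv
  have hmap : Tendsto (fun s : ℝ => (-s)⁻¹) atBot (nhdsWithin 0 {(0:ℝ)}ᶜ) := by
    have h1 : Tendsto (fun s : ℝ => -s) atBot atTop := tendsto_neg_atBot_atTop
    have h2 := tendsto_inv_atTop_nhdsGT_zero.comp h1
    exact h2.mono_right (nhdsWithin_mono _ (fun x hx => hx.ne'))
  have main : Tendsto (fun s : ℝ => slope h 0 (-s)⁻¹) atBot (nhds (-d * t)) :=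
    hslope.comp hmap
  have heq : ∀ᶠ s in atBot, modMvN a d t s / |s| ^ (d - 1) = slope h 0 (-s)⁻¹ := by
    filter_upwards [eventually_le_atBot (-(|t| + 1))] with s hs
    have habs := abs_nonneg t
    have hnat := neg_abs_le t
    have hx : (0:ℝ) < -s := by linarith
    have hxt : |t| < -s := by linarith
    have hts : 0 < t - s := by linarith
    have hsneg : s < 0 := by linarith
    have hs0 : s ≠ 0 := ne_of_lt hsneg
    have hA : (0:ℝ) < 1 + a * (-s)⁻¹ := by positivity
    have hB : (0:ℝ) < 1 + (a + t) * (-s)⁻¹ := by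
      have e2 : 1 + (a + t) * (-s)⁻¹ = (-s + (a + t)) * (-s)⁻¹ := by field_simp; ring
      rw [e2]
      have : 0 < -s + (a + t) := by linarith
      positivity
    have e1 : a + -s = (1 + a * (-s)⁻¹) * -s := by field_simp; ring
    have e2 : a + (t - s) = (1 + (a + t) * (-s)⁻¹) * -s := by field_simp; ring
    have hd1 : (0:ℝ) < (-s) ^ (d - 1) := Real.rpow_pos_of_pos hx _
    have hxd : (-s) ^ d = (-s) ^ (d - 1) * -s := by
      rw [← Real.rpow_add_one hx.ne' (d - 1)]; ring_nf
    rw [modMvN, max_eq_left hx.le, max_eq_left hts.le, abs_of_neg hsneg,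
      slope_def_field, e1, e2, Real.mul_rpow hA.le hx.le, Real.mul_rpow hB.le hx.le]
    simp only [hh, sub_zero]
    rw [hxd]
    have h0 : h 0 = 0 := by simp [hh]
    field_simp
    ring
  have part1 : Tendsto (fun s : ℝ => modMvN a d t s / |s| ^ (d - 1)) atBot (nhds (-d * t)) :=
    main.congr' (EventuallyEq.symm heq)
  refine ⟨part1, fun ht => ?_⟩
  have hdt : |d * t| ≠ 0 := abs_ne_zero.mpr (mul_ne_zero hd.ne ht)
  have h2 := (part1.abs).div_const |d * t|
  have habs : |(-d * t)| = |d * t| := by rw [neg_mul, abs_neg]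
  rw [habs, div_self hdt] at h2
  refine h2.congr' ?_
  filter_upwards [eventually_le_atBot (-1 : ℝ)] with s hs
  have hsneg : s < 0 := by linarith
  have hpos : (0:ℝ) < |s| ^ (d - 1) := Real.rpow_pos_of_pos (abs_pos.mpr hsneg.ne) _
  rw [abs_div, abs_of_pos hpos, div_div, mul_comm (|s| ^ (d - 1)) (|d * t|)]
end

section
/- Let a > 0 and d < 0, and let t ∈ ℝ. For every real δ > 1/(1−d), the function s ↦ f_{a,d}(t,s) satisfies ∫_ℝ |f_{a,d}(t,s)|^δ ds < ∞; in particular f_{a,d}(t,·) belongs to L¹(ℝ) ∩ L²(ℝ). -/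
open MeasureTheory Set
open scoped ENNReal NNReal

/-- Mean value estimate for `rpow` with negative exponent. -/
lemma rpow_sub_abs_le {d x A B : ℝ} (hd : d < 0) (hx : 0 < x) (hA : x ≤ A) (hB : x ≤ B) :
    |A ^ d - B ^ d| ≤ |d| * x ^ (d - 1) * |A - B| := by
  have hder : ∀ y ∈ Ici x, HasDerivWithinAt (fun z : ℝ => z ^ d)
      (d * y ^ (d - 1)) (Ici x) y := fun y hy =>
    (Real.hasDerivAt_rpow_const (Or.inl (hx.trans_le hy).ne')).hasDerivWithinAt
  have hbound : ∀ y ∈ Ici x, ‖d * y ^ (d - 1)‖ ≤ |d| * x ^ (d - 1) := by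
    intro y hy
    have hy' : x ≤ y := hy
    have hle : y ^ (d - 1) ≤ x ^ (d - 1) :=
      Real.rpow_le_rpow_of_nonpos hx hy' (by linarith)
    rw [norm_mul, Real.norm_eq_abs, Real.norm_eq_abs,
      abs_of_nonneg (Real.rpow_nonneg (hx.trans_le hy').le _)]
    exact mul_le_mul_of_nonneg_left hle (abs_nonneg d)
  have h := Convex.norm_image_sub_le_of_norm_hasDerivWithin_le hder hbound (convex_Ici x) hB hA
  simpa [Real.norm_eq_abs] using h

lemma modMvN_continuous (a d t : ℝ) (ha : 0 < a) :
    Continuous (fun s : ℝ => modMvN a d t s) := by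
  unfold modMvN
  have c1 : Continuous fun s : ℝ => a + max (-s) 0 := by fun_prop
  have c2 : Continuous fun s : ℝ => a + max (t - s) 0 := by fun_prop
  exact (c1.rpow_const fun x => Or.inl (by positivity)).sub
    (c2.rpow_const fun x => Or.inl (by positivity))

/-- Key integrability lemma. -/
lemma modMvN_abs_rpow_integrable (a d t : ℝ) (ha : 0 < a) (hd : d < 0)
    {δ : ℝ} (hδ : 1 / (1 - d) < δ) :
    Integrable (fun s : ℝ => |modMvN a d t s| ^ δ) volume := by
  have h1d : (0:ℝ) < 1 - d := by linarith
  have hδ0 : 0 < δ := lt_trans (by positivity) hδ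
  set m : ℝ := min 0 t with hm
  set T : ℝ := max 0 t with hT
  set C : ℝ := a + |d| * |t| with hC
  set q : ℝ := (d - 1) * δ with hq'
  have hq : q < -1 := by
    have : 1 < δ * (1 - d) := by
      rw [div_lt_iff₀ h1d] at hδ; linarith
    nlinarith
  have hC0 : 0 < C := by positivity
  -- zero for s ≥ T
  have hzero : ∀ s : ℝ, T ≤ s → modMvN a d t s = 0 := by
    intro s hs
    have h0s : (0:ℝ) ≤ s := le_trans (le_max_left 0 t) hs
    have hts : t ≤ s := le_trans (le_max_right 0 t) hs
    have h1 : max (-s) 0 = 0 := max_eq_right (by linarith)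
    have h2 : max (t - s) 0 = 0 := max_eq_right (by linarith)
    simp [modMvN, h1, h2]
  -- pointwise bound
  have hbound_all : ∀ s : ℝ, |modMvN a d t s| ≤ C * (a + max (m - s) 0) ^ (d - 1) := by
    intro s
    by_cases hs : s ≤ m
    · have hs0 : s ≤ 0 := hs.trans (min_le_left 0 t)
      have hst : s ≤ t := hs.trans (min_le_right 0 t)
      have h1 : max (-s) 0 = -s := max_eq_left (by linarith)
      have h2 : max (t - s) 0 = t - s := max_eq_left (by linarith)
      have h3 : max (m - s) 0 = m - s := max_eq_left (by linarith)
      have hx : (0:ℝ) < a + (m - s) := by linarith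
      have hA : a + (m - s) ≤ a + -s := by
        have : m ≤ 0 := min_le_left 0 t; linarith
      have hB : a + (m - s) ≤ a + (t - s) := by
        have : m ≤ t := min_le_right 0 t; linarith
      have hmv := rpow_sub_abs_le hd hx hA hB
      have habd : |a + -s - (a + (t - s))| = |t| := by
        rw [show a + -s - (a + (t - s)) = -t by ring, abs_neg]
      rw [modMvN, h1, h2, h3]
      calc |(a + -s) ^ d - (a + (t - s)) ^ d|
          ≤ |d| * (a + (m - s)) ^ (d - 1) * |a + -s - (a + (t - s))| := hmv
        _ = |d| * |t| * (a + (m - s)) ^ (d - 1) := by rw [habd]; ring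
        _ ≤ C * (a + (m - s)) ^ (d - 1) := by
            apply mul_le_mul_of_nonneg_right _ (Real.rpow_nonneg hx.le _)
            rw [hC]; nlinarith
    · -- s > m : use the crude bound a^d
      push_neg at hs
      have h3 : max (m - s) 0 = 0 := max_eq_right (by linarith)
      rw [h3, add_zero]
      have haux : ∀ u : ℝ, 0 ≤ u → (a + u) ^ d ≤ a ^ d := fun u hu =>
        Real.rpow_le_rpow_of_nonpos ha (by linarith) hd.le
      have hp1 : 0 < (a + max (-s) 0) ^ d := Real.rpow_pos_of_pos (by positivity) d
      have hp2 : 0 < (a + max (t - s) 0) ^ d := Real.rpow_pos_of_pos (by positivity) d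
      have hq1 : (a + max (-s) 0) ^ d ≤ a ^ d := haux _ (le_max_right _ _)
      have hq2 : (a + max (t - s) 0) ^ d ≤ a ^ d := haux _ (le_max_right _ _)
      have hfb : |modMvN a d t s| ≤ a ^ d := by
        rw [modMvN, abs_sub_le_iff]; constructor <;> linarith
      have had : a ^ d = a * a ^ (d - 1) := by
        rw [← Real.rpow_one_add' (le_of_lt ha) (by intro h; linarith), add_sub_cancel]
      calc |modMvN a d t s| ≤ a ^ d := hfb
        _ = a * a ^ (d - 1) := had
        _ ≤ C * a ^ (d - 1) := by
            apply mul_le_mul_of_nonneg_right _ (Real.rpow_nonneg ha.le _)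
            rw [hC]; nlinarith [mul_nonneg (abs_nonneg d) (abs_nonneg t)]
  -- dominating function
  set G : ℝ → ℝ := (Iio T).indicator (fun s => C ^ δ * (a + max (m - s) 0) ^ q) with hG
  have hmT : m ≤ T := le_trans (min_le_left 0 t) (le_max_left 0 t)
  have hGint : Integrable G volume := by
    rw [hG, integrable_indicator_iff measurableSet_Iio]
    apply Integrable.const_mul
    have piece1 : IntegrableOn (fun s : ℝ => (a + max (m - s) 0) ^ q) (Iio m) volume := by
      have h0 : IntegrableOn (fun u : ℝ => u ^ q) (Ioi a) volume :=
        integrableOn_Ioi_rpow_of_lt hq ha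
      have hF : Integrable ((Ioi a).indicator (fun u : ℝ => u ^ q)) volume :=
        (integrable_indicator_iff measurableSet_Ioi).mpr h0
      have h2 : Integrable (fun s : ℝ => (Ioi a).indicator (fun u : ℝ => u ^ q) ((a + m) - s))
          volume := (integrable_comp_sub_left ((Ioi a).indicator (fun u : ℝ => u ^ q)) (a + m)).mpr hF
      have h3 : (fun s : ℝ => (Ioi a).indicator (fun u : ℝ => u ^ q) ((a + m) - s)) =
          (Iio m).indicator (fun s : ℝ => ((a + m) - s) ^ q) := by
        funext s
        by_cases hs : s < m
        · rw [indicator_of_mem (by simp only [mem_Ioi]; linarith) (fun u : ℝ => u ^ q),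
            indicator_of_mem (mem_Iio.mpr hs)]
        · rw [indicator_of_notMem (by simp only [mem_Ioi, not_lt]; linarith) (fun u : ℝ => u ^ q),
            indicator_of_notMem (by simpa using hs)]
      rw [h3] at h2
      have h4 : IntegrableOn (fun s : ℝ => ((a + m) - s) ^ q) (Iio m) volume :=
        (integrable_indicator_iff measurableSet_Iio).mp h2
      apply h4.congr_fun _ measurableSet_Iio
      intro s hs
      have hms : max (m - s) 0 = m - s := max_eq_left (by simp only [mem_Iio] at hs; linarith)
      simp only [hms]
      ring_nf
    have piece2 : IntegrableOn (fun s : ℝ => (a + max (m - s) 0) ^ q) (Icc m T) volume := by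
      have hc : Continuous fun s : ℝ => (a + max (m - s) 0) ^ q := by
        have cb : Continuous fun s : ℝ => a + max (m - s) 0 := by fun_prop
        exact cb.rpow_const fun x => Or.inl ((by positivity : (0:ℝ) < a + max (m - x) 0).ne')
      exact hc.integrableOn_Icc
    have hsub : Iio T ⊆ Iio m ∪ Icc m T := by
      intro s hs
      simp only [mem_Iio] at hs
      by_cases h : s < m
      · exact Or.inl h
      · exact Or.inr ⟨le_of_not_gt h, hs.le⟩
    exact (piece1.union piece2).mono_set hsub
  have hmeas : AEStronglyMeasurable (fun s : ℝ => |modMvN a d t s| ^ δ) volume := by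
    have : Continuous fun s : ℝ => |modMvN a d t s| ^ δ :=
      ((modMvN_continuous a d t ha).abs).rpow_const fun x => Or.inr hδ0.le
    exact this.aestronglyMeasurable
  apply hGint.mono' hmeas
  filter_upwards with s
  rw [Real.norm_eq_abs, abs_of_nonneg (Real.rpow_nonneg (abs_nonneg _) _)]
  by_cases hs : s < T
  · rw [hG, indicator_of_mem (by simpa using hs)]
    have hbase : (0:ℝ) < a + max (m - s) 0 := by positivity
    calc |modMvN a d t s| ^ δ
        ≤ (C * (a + max (m - s) 0) ^ (d - 1)) ^ δ :=
          Real.rpow_le_rpow (abs_nonneg _) (hbound_all s) hδ0.le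
      _ = C ^ δ * (a + max (m - s) 0) ^ q := by
          rw [Real.mul_rpow hC0.le (Real.rpow_nonneg hbase.le _), hq',
            Real.rpow_mul hbase.le]
  · rw [hG, indicator_of_notMem (by simpa using hs)]
    rw [hzero s (le_of_not_gt hs), abs_zero, Real.zero_rpow hδ0.ne']

/-- For `a > 0`, `d < 0` and `t ∈ ℝ`: for every `δ > 1/(1-d)` the function
`s ↦ f_{a,d}(t,s)` satisfies `∫ |f_{a,d}(t,s)|^δ ds < ∞`; in particular it belongs to
`L¹(ℝ) ∩ L²(ℝ)`. -/
theorem modMvN_Lp_integrability (a d t : ℝ) (ha : 0 < a) (hd : d < 0) :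
    (∀ δ : ℝ, 1 / (1 - d) < δ →
      ∫⁻ s : ℝ, ENNReal.ofReal (|modMvN a d t s| ^ δ) ∂volume < ⊤) ∧
    MemLp (fun s : ℝ => modMvN a d t s) 1 volume ∧
    MemLp (fun s : ℝ => modMvN a d t s) 2 volume := by
  have h1d : (0:ℝ) < 1 - d := by linarith
  have key : ∀ δ : ℝ, 1 / (1 - d) < δ →
      ∫⁻ s : ℝ, ENNReal.ofReal (|modMvN a d t s| ^ δ) ∂volume < ⊤ := by
    intro δ hδ
    have hint := modMvN_abs_rpow_integrable a d t ha hd hδ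
    have h := hint.hasFiniteIntegral
    rw [hasFiniteIntegral_iff_norm] at h
    convert h using 1
    refine lintegral_congr fun s => ?_
    rw [Real.norm_eq_abs, abs_of_nonneg (Real.rpow_nonneg (abs_nonneg _) _)]
  have hlt1 : 1 / (1 - d) < 1 := (div_lt_one h1d).mpr (by linarith)
  have hmeas : AEStronglyMeasurable (fun s : ℝ => modMvN a d t s) volume :=
    (modMvN_continuous a d t ha).aestronglyMeasurable
  refine ⟨key, ?_, ?_⟩
  · rw [memLp_one_iff_integrable]
    refine ⟨hmeas, ?_⟩
    rw [hasFiniteIntegral_iff_norm]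
    have h1 := key 1 hlt1
    convert h1 using 1
    refine lintegral_congr fun s => ?_
    rw [Real.rpow_one, Real.norm_eq_abs]
  · refine ⟨hmeas, ?_⟩
    rw [eLpNorm_lt_top_iff_lintegral_rpow_enorm_lt_top (by norm_num) (by norm_num)]
    have h2 := key 2 (hlt1.trans (by norm_num))
    simp only [ENNReal.toReal_ofNat]
    have hpt : ∀ y : ℝ, ‖y‖ₑ ^ (2:ℝ) = ENNReal.ofReal (|y| ^ (2:ℝ)) := by
      intro y
      rw [Real.enorm_eq_ofReal_abs,
        ENNReal.ofReal_rpow_of_nonneg (abs_nonneg y) (by norm_num : (0:ℝ) ≤ 2)]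
    simp only [hpt]
    exact h2
end

section
/- Let a > 0 and d ∈ (−1/2, 0). Then for every t > 0, ∫_ℝ f_{a,d}(t,u)² du = C + a^{2d}·t − (2a^d/(d+1))·(t+a)^{d+1} + (t+a)^{2d+1}/(2d+1) + c(t)·t^{2d+1}, where C = a^{2d+1}·(2/(d+1) − 1/(2d+1)) and c(t) = ∫_{−∞}^{−a/t} ((1−y)^d − (−y)^d)² dy. -/
open MeasureTheory

open Set in
lemma modMvN_aux_rpow_sub_rpow_le {x t d : ℝ} (hx : 0 < x) (ht : 0 ≤ t) (hd : d < 0) :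
    x ^ d - (x + t) ^ d ≤ (-d) * t * x ^ (d - 1) := by
  rcases eq_or_lt_of_le ht with rfl | ht'
  · simp
  · have hxt : x < x + t := by linarith
    obtain ⟨c, hc, hceq⟩ := exists_hasDerivAt_eq_slope (fun u => u ^ d)
      (fun u => d * u ^ (d - 1)) hxt
      (by
        apply ContinuousOn.rpow_const continuousOn_id
        intro u hu; left; exact (lt_of_lt_of_le hx hu.1).ne')
      (fun u hu => Real.hasDerivAt_rpow_const (Or.inl (hx.trans hu.1).ne'))
    have hc0 : 0 < c := hx.trans hc.1
    have hs : x + t - x = t := by ring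
    rw [hs, eq_div_iff ht'.ne'] at hceq
    have key : x ^ d - (x + t) ^ d = (-d) * t * c ^ (d - 1) := by linarith
    have hle : c ^ (d - 1) ≤ x ^ (d - 1) :=
      Real.rpow_le_rpow_of_nonpos hx hc.1.le (by linarith)
    have hnn : 0 ≤ (-d) * t := by nlinarith
    rw [key]
    exact mul_le_mul_of_nonneg_left hle hnn

open Set in
/-- For `a > 0`, `d ∈ (-1/2, 0)` and `t > 0`,
`∫ f_{a,d}(t,u)² du = C + a^{2d} t - (2 a^d/(d+1)) (t+a)^{d+1} + (t+a)^{2d+1}/(2d+1)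
  + c(t) t^{2d+1}`, with `C = a^{2d+1} (2/(d+1) - 1/(2d+1))` and
`c(t) = ∫_{-∞}^{-a/t} ((1-y)^d - (-y)^d)² dy`. -/
theorem modMvN_sq_integral (a d t : ℝ) (ha : 0 < a) (hd : d ∈ Set.Ioo (-(1 / 2) : ℝ) 0)
    (ht : 0 < t) :
    ∫ u : ℝ, (modMvN a d t u) ^ 2 =
      a ^ (2 * d + 1) * (2 / (d + 1) - 1 / (2 * d + 1)) + a ^ (2 * d) * t
        - (2 * a ^ d / (d + 1)) * (t + a) ^ (d + 1)
        + (t + a) ^ (2 * d + 1) / (2 * d + 1)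
        + (∫ y in Set.Iic (-a / t), ((1 - y) ^ d - (-y) ^ d) ^ 2) * t ^ (2 * d + 1) := by
  obtain ⟨hd1, hd2⟩ := hd
  set g : ℝ → ℝ := fun u => (modMvN a d t u) ^ 2 with hgdef
  have hd1' : (d : ℝ) + 1 ≠ 0 := by norm_num at hd1 ⊢; linarith
  have h2d1 : 2 * d + 1 ≠ 0 := by norm_num at hd1 ⊢; linarith
  -- squares of rpow
  have hsq : ∀ {x : ℝ}, 0 ≤ x → ∀ p : ℝ, (x ^ p) ^ 2 = x ^ (2 * p) := by
    intro x hx p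
    rw [← Real.rpow_natCast (x ^ p) 2, ← Real.rpow_mul hx]
    norm_num [mul_comm]
  -- continuity
  have hpos1 : ∀ s : ℝ, 0 < a + max (-s) 0 := by
    intro s; have := le_max_right (-s) (0 : ℝ); linarith
  have hpos2 : ∀ s : ℝ, 0 < a + max (t - s) 0 := by
    intro s; have := le_max_right (t - s) (0 : ℝ); linarith
  have hcont : Continuous g := by
    apply Continuous.pow
    apply Continuous.sub
    · exact (continuous_const.add ((continuous_neg).max continuous_const)).rpow_const
        (fun s => Or.inl (hpos1 s).ne')
    · exact (continuous_const.add ((continuous_const.sub continuous_id).max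
        continuous_const)).rpow_const (fun s => Or.inl (hpos2 s).ne')
  -- explicit forms
  have hIicform : ∀ s : ℝ, s ≤ 0 → modMvN a d t s = (a - s) ^ d - (a + t - s) ^ d := by
    intro s hs
    unfold modMvN
    rw [max_eq_left (by linarith), max_eq_left (by linarith)]
    ring_nf
  have hIocform : ∀ s ∈ Icc (0:ℝ) t, modMvN a d t s = a ^ d - (a + (t - s)) ^ d := by
    intro s hs
    unfold modMvN
    rw [max_eq_right (by linarith [hs.1] : -s ≤ 0), max_eq_left (by linarith [hs.2]), add_zero]
  have hIoiform : ∀ s ∈ Ioi t, modMvN a d t s = 0 := by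
    intro s hs
    simp only [mem_Ioi] at hs
    unfold modMvN
    rw [max_eq_right (by linarith : -s ≤ 0), max_eq_right (by linarith : t - s ≤ 0)]
    ring
  -- integrability on Iic 0
  have hq : (2 * d - 2 : ℝ) < -1 := by linarith
  have hIntIic : IntegrableOn g (Iic 0) := by
    have base : IntegrableOn (fun x : ℝ => x ^ (2 * d - 2)) (Ici a) :=
      (integrableOn_Ioi_rpow_of_lt hq (half_pos ha)).mono_set
        (fun x hx => lt_of_lt_of_le (half_lt_self ha) hx)
    set F : ℝ → ℝ := (Ici a).indicator (fun x => x ^ (2 * d - 2)) with hFdef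
    have hF : Integrable F := (integrable_indicator_iff measurableSet_Ici).2 base
    have hF2 : Integrable (fun s : ℝ => F (a - s)) := hF.comp_sub_left a
    have hMint : IntegrableOn (fun s : ℝ => d ^ 2 * t ^ 2 * (a - s) ^ (2 * d - 2)) (Iic 0) := by
      apply Integrable.const_mul
      apply (hF2.integrableOn).congr_fun _ measurableSet_Iic
      intro s hs
      simp only [hFdef, Set.indicator_of_mem (by simp only [mem_Ici]; linarith [mem_Iic.1 hs] :
        a - s ∈ Ici a)]
    apply Integrable.mono' hMint (hcont.aestronglyMeasurable.restrict)
    filter_upwards [ae_restrict_mem measurableSet_Iic] with s hs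
    have hs0 : s ≤ 0 := hs
    have hx : 0 < a - s := by linarith
    have hdiff0 : 0 ≤ (a - s) ^ d - (a + t - s) ^ d := by
      have : (a - s) ^ d ≥ (a + t - s) ^ d :=
        Real.rpow_le_rpow_of_nonpos hx (by linarith) hd2.le
      linarith
    have hdiffle : (a - s) ^ d - (a + t - s) ^ d ≤ (-d) * t * (a - s) ^ (d - 1) := by
      have := modMvN_aux_rpow_sub_rpow_le hx ht.le hd2
      have heq : a - s + t = a + t - s := by ring
      rwa [heq] at this
    rw [Real.norm_eq_abs, hgdef]
    simp only [hIicform s hs0]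
    rw [abs_of_nonneg (by positivity)]
    have h1 : ((a - s) ^ d - (a + t - s) ^ d) ^ 2 ≤ ((-d) * t * (a - s) ^ (d - 1)) ^ 2 := by
      apply pow_le_pow_left₀ hdiff0 hdiffle
    calc ((a - s) ^ d - (a + t - s) ^ d) ^ 2 ≤ ((-d) * t * (a - s) ^ (d - 1)) ^ 2 := h1
      _ = d ^ 2 * t ^ 2 * ((a - s) ^ (d - 1)) ^ 2 := by ring
      _ = d ^ 2 * t ^ 2 * (a - s) ^ (2 * d - 2) := by
          rw [hsq hx.le (d - 1)]; ring_nf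
  -- integrability on the other pieces
  have hIntIoc : IntegrableOn g (Ioc 0 t) := hcont.integrableOn_Ioc
  have hIntIoi : IntegrableOn g (Ioi t) := by
    apply (integrableOn_congr_fun (g := fun _ => (0:ℝ)) _ measurableSet_Ioi).2
      (integrableOn_zero)
    intro s hs
    simp [hgdef, hIoiform s hs]
  have hIntIicT : IntegrableOn g (Iic t) := by
    rw [← Iic_union_Ioc_eq_Iic ht.le]; exact hIntIic.union hIntIoc
  -- splitting
  have hIoi0 : ∫ u in Ioi t, g u = 0 := by
    rw [setIntegral_congr_fun measurableSet_Ioi (fun s hs => by simp [hgdef, hIoiform s hs] :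
      EqOn g (fun _ => (0:ℝ)) (Ioi t))]
    simp
  have hsplit : ∫ u : ℝ, g u = (∫ u in Iic 0, g u) + ∫ u in Ioc 0 t, g u := by
    calc ∫ u : ℝ, g u = ∫ u in Iic t ∪ Ioi t, g u := by
          rw [Iic_union_Ioi, setIntegral_univ]
      _ = (∫ u in Iic t, g u) + ∫ u in Ioi t, g u :=
          setIntegral_union (Iic_disjoint_Ioi le_rfl) measurableSet_Ioi hIntIicT hIntIoi
      _ = ∫ u in Iic t, g u := by rw [hIoi0, add_zero]
      _ = (∫ u in Iic 0, g u) + ∫ u in Ioc 0 t, g u := by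
          rw [← Iic_union_Ioc_eq_Iic ht.le]
          exact setIntegral_union (Iic_disjoint_Ioc le_rfl) measurableSet_Ioc hIntIic hIntIoc

  -- middle integral
  have hJ : ∀ p : ℝ, -1 < p → ∫ x in (0:ℝ)..t, (a + x) ^ p
      = ((t + a) ^ (p + 1) - a ^ (p + 1)) / (p + 1) := by
    intro p hp
    have h1 : ∫ x in (0:ℝ)..t, (a + x) ^ p = ∫ x in (a + 0)..(a + t), x ^ p :=
      intervalIntegral.integral_comp_add_left (fun y => y ^ p) a
    rw [h1, add_zero, integral_rpow (Or.inl hp), add_comm a t]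
  have hcOn : ∀ p : ℝ, ContinuousOn (fun x : ℝ => (a + x) ^ p) (uIcc 0 t) := by
    intro p
    apply ContinuousOn.rpow_const (continuous_const.add continuous_id).continuousOn
    intro x hx
    rw [uIcc_of_le ht.le] at hx
    exact Or.inl (by have := hx.1; exact (by linarith : (0:ℝ) < a + x).ne')
  have hInt1 : IntervalIntegrable (fun x : ℝ => (a + x) ^ d) volume 0 t :=
    (hcOn d).intervalIntegrable
  have hInt2 : IntervalIntegrable (fun x : ℝ => (a + x) ^ (2 * d)) volume 0 t :=
    (hcOn (2 * d)).intervalIntegrable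
  have hmid : ∫ u in Ioc 0 t, g u
      = a ^ (2 * d) * t - 2 * a ^ d / (d + 1) * ((t + a) ^ (d + 1) - a ^ (d + 1))
        + ((t + a) ^ (2 * d + 1) - a ^ (2 * d + 1)) / (2 * d + 1) := by
    rw [← intervalIntegral.integral_of_le ht.le]
    have e1 : ∫ u in (0:ℝ)..t, g u = ∫ y in (0:ℝ)..t, (a ^ d - (a + y) ^ d) ^ 2 := by
      calc ∫ u in (0:ℝ)..t, g u
          = ∫ x in (0:ℝ)..t, (a ^ d - (a + (t - x)) ^ d) ^ 2 :=
            intervalIntegral.integral_congr (fun s hs => by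
              rw [uIcc_of_le ht.le] at hs; simp only [hgdef, hIocform s hs])
        _ = ∫ y in (t - t)..(t - 0), (a ^ d - (a + y) ^ d) ^ 2 :=
            intervalIntegral.integral_comp_sub_left (fun y => (a ^ d - (a + y) ^ d) ^ 2) t
        _ = ∫ y in (0:ℝ)..t, (a ^ d - (a + y) ^ d) ^ 2 := by norm_num
    rw [e1]
    have e2 : ∫ x in (0:ℝ)..t, (a ^ d - (a + x) ^ d) ^ 2
        = ∫ x in (0:ℝ)..t, (a ^ (2 * d) - 2 * a ^ d * (a + x) ^ d + (a + x) ^ (2 * d)) := by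
      apply intervalIntegral.integral_congr
      intro x hx
      rw [uIcc_of_le ht.le] at hx
      have hax : (0:ℝ) ≤ a + x := by linarith [hx.1]
      simp only
      rw [show (a ^ d - (a + x) ^ d) ^ 2
          = (a ^ d) ^ 2 - 2 * a ^ d * (a + x) ^ d + ((a + x) ^ d) ^ 2 by ring,
        hsq ha.le d, hsq hax d]
    rw [e2, intervalIntegral.integral_add (by
          exact (intervalIntegrable_const).sub (hInt1.const_mul (2 * a ^ d))) hInt2,
      intervalIntegral.integral_sub intervalIntegrable_const (hInt1.const_mul (2 * a ^ d)),
      intervalIntegral.integral_const_mul, intervalIntegral.integral_const,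
      hJ d (by linarith), hJ (2 * d) (by linarith)]
    have h2d1' : 2 * d + 1 = 2 * d + 1 := rfl
    simp only [smul_eq_mul, sub_zero]
    rw [show (2 * d : ℝ) + 1 = 2 * d + 1 from rfl]
    field_simp
  -- left integral
  have hleft : ∫ u in Iic 0, g u
      = (∫ y in Iic (-a / t), ((1 - y) ^ d - (-y) ^ d) ^ 2) * t ^ (2 * d + 1) := by
    set F : ℝ → ℝ := (Iic (0:ℝ)).indicator g with hFdef
    have h1 : ∫ u in Iic 0, g u = ∫ x, F x := (integral_indicator measurableSet_Iic).symm
    have h3 : ∫ y : ℝ, F (t * y + a) = |t⁻¹| • ∫ x, F x := by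
      calc ∫ y : ℝ, F (t * y + a) = ∫ y : ℝ, (fun z => F (z + a)) (t * y) := by simp
        _ = |t⁻¹| • ∫ z, F (z + a) :=
            MeasureTheory.Measure.integral_comp_mul_left (fun z => F (z + a)) t
        _ = |t⁻¹| • ∫ x, F x := by rw [integral_add_right_eq_self]
    have habs : |t⁻¹| = t⁻¹ := abs_of_pos (by positivity)
    have h4 : ∫ x, F x = t * ∫ y : ℝ, F (t * y + a) := by
      rw [h3, habs, smul_eq_mul, ← mul_assoc, mul_inv_cancel₀ ht.ne', one_mul]
    have h5 : ∀ y : ℝ, F (t * y + a)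
        = (Iic (-a / t)).indicator (fun y => g (t * y + a)) y := by
      intro y
      have hiff : t * y + a ≤ 0 ↔ y ≤ -a / t := by
        rw [le_div_iff₀ ht]
        constructor <;> intro h <;> nlinarith
      by_cases hy : y ≤ -a / t
      · rw [Set.indicator_of_mem (mem_Iic.2 hy), hFdef,
          Set.indicator_of_mem (mem_Iic.2 (hiff.2 hy))]
      · rw [Set.indicator_of_notMem (fun h => hy (mem_Iic.1 h)), hFdef,
          Set.indicator_of_notMem (fun h => hy (hiff.1 (mem_Iic.1 h)))]
    have h6 : ∫ y : ℝ, F (t * y + a) = ∫ y in Iic (-a / t), g (t * y + a) := by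
      simp_rw [h5]
      exact integral_indicator measurableSet_Iic
    have h7 : ∫ y in Iic (-a / t), g (t * y + a)
        = ∫ y in Iic (-a / t), t ^ (2 * d) * ((1 - y) ^ d - (-y) ^ d) ^ 2 := by
      apply setIntegral_congr_fun measurableSet_Iic
      intro y hy
      have hy' : y ≤ -a / t := mem_Iic.1 hy
      have hty : t * y + a ≤ 0 := by
        rw [le_div_iff₀ ht] at hy'; nlinarith
      have hyneg : (0:ℝ) ≤ -y := by nlinarith [hy', div_pos ha ht]
      simp only [hgdef]
      rw [hIicform _ hty]
      have e : a - (t * y + a) = t * (-y) := by ring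
      have e' : a + t - (t * y + a) = t * (1 - y) := by ring
      rw [e, e', Real.mul_rpow ht.le hyneg, Real.mul_rpow ht.le (by linarith : (0:ℝ) ≤ 1 - y)]
      rw [show (t ^ d * (-y) ^ d - t ^ d * (1 - y) ^ d) ^ 2
          = (t ^ d) ^ 2 * ((1 - y) ^ d - (-y) ^ d) ^ 2 by ring, hsq ht.le d]
    rw [h1, h4, h6, h7, MeasureTheory.integral_const_mul, Real.rpow_add ht, Real.rpow_one]
    ring
  -- assembling
  have e4 : a ^ d * a ^ (d + 1) = a ^ (2 * d + 1) := by
    rw [← Real.rpow_add ha]; ring_nf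
  rw [hsplit, hmid, hleft, ← e4]
  field_simp
  ring
end

section
/- Let a > 0, d ∈ (−1/2, 0) and fix r > 0. Define I(t) = ∫_ℝ f_{a,d}(t,u)² du for t > 0. Then lim_{h→∞} ( I((h+1)r) + I((h−1)r) − 2·I(hr) ) / ( (hr+a)^{d−1} ) = 2·(−d)·a^d·r², where the limit is taken over real h → ∞. (Hence the covariance γ_r(h) of two increments of length r at lag hr of the fractional subordinator is asymptotically Var(S₁)·|d|·a^d·r²·(hr+a)^{d−1}.) -/
open MeasureTheory Filter

/-- `I(t) = ∫_ℝ f_{a,d}(t,u)² du`. -/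
noncomputable def modMvNI (a d t : ℝ) : ℝ :=
  ∫ u : ℝ, (modMvN a d t u) ^ 2

open Set Real

section Aux

variable {a d : ℝ}

/-- Mean value theorem bound for `rpow` with exponent `< 1`. -/
lemma mvn_rpow_mvt {q x y : ℝ} (hq : q < 1) (hx : 0 < x) (hxy : x ≤ y) :
    |y ^ q - x ^ q| ≤ |q| * x ^ (q - 1) * (y - x) := by
  rcases eq_or_lt_of_le hxy with rfl | hlt
  · simp
  obtain ⟨c, hc, hceq⟩ := exists_hasDerivAt_eq_slope (fun z => z ^ q)
      (fun z => q * z ^ (q - 1)) hlt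
      (fun z hz => (Real.continuousAt_rpow_const z q
        (Or.inl (lt_of_lt_of_le hx hz.1).ne')).continuousWithinAt)
      (fun z hz => Real.hasDerivAt_rpow_const (Or.inl (hx.trans hz.1).ne'))
  have hcpos : 0 < c := hx.trans hc.1
  have hyx : 0 < y - x := sub_pos.2 hlt
  have heq : y ^ q - x ^ q = q * c ^ (q - 1) * (y - x) := by
    rw [hceq]; field_simp
  have h2 : c ^ (q - 1) ≤ x ^ (q - 1) :=
    Real.rpow_le_rpow_of_nonpos hx hc.1.le (by linarith)
  have h3 : (0:ℝ) ≤ c ^ (q - 1) := (Real.rpow_pos_of_pos hcpos _).le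
  rw [heq, abs_mul, abs_mul, abs_of_nonneg h3, abs_of_pos hyx]
  exact mul_le_mul_of_nonneg_right (mul_le_mul_of_nonneg_left h2 (abs_nonneg q)) hyx.le

lemma mvn_rpow_sub_rpow_le (hd2 : d < 0) {x y : ℝ} (hx : 0 < x) (hxy : x ≤ y) :
    x ^ d - y ^ d ≤ (-d) * x ^ (d - 1) * (y - x) := by
  have h := mvn_rpow_mvt (by linarith : d < 1) hx hxy
  have h0 : y ^ d ≤ x ^ d := Real.rpow_le_rpow_of_nonpos hx hxy hd2.le
  rw [abs_of_nonpos (by linarith), abs_of_neg hd2] at h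
  linarith

lemma mvn_rpow_nonneg_sub (hd2 : d < 0) {x y : ℝ} (hx : 0 < x) (hxy : x ≤ y) :
    0 ≤ x ^ d - y ^ d :=
  sub_nonneg.2 (Real.rpow_le_rpow_of_nonpos hx hxy hd2.le)

lemma continuous_modMvN (ha : 0 < a) (t : ℝ) : Continuous (fun u => modMvN a d t u) := by
  unfold modMvN
  have base : ∀ c : ℝ, Continuous (fun u : ℝ => (a + max (c - u) 0) ^ d) := by
    intro c
    refine (Continuous.add continuous_const
      (((continuous_const.sub continuous_id).max continuous_const))).rpow_const ?_
    intro u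
    exact Or.inl (by positivity : (0:ℝ) < a + max (c - u) 0).ne'
  have h0 := base 0
  simp only [zero_sub] at h0
  exact h0.sub (base t)

lemma modMvN_of_ge {t u : ℝ} (ht : 0 ≤ t) (hu : t ≤ u) : modMvN a d t u = 0 := by
  unfold modMvN
  rw [max_eq_right (neg_nonpos.2 (ht.trans hu)), max_eq_right (sub_nonpos.2 hu), sub_self]

lemma abs_modMvN_le (ha : 0 < a) (hd2 : d < 0) {t : ℝ} (ht : 0 ≤ t) {u : ℝ} (hu : u ≤ t) :
    |modMvN a d t u| ≤ (-d) * t * (a + max (-u) 0) ^ (d - 1) := by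
  set x := a + max (-u) 0 with hxdef
  set y := a + max (t - u) 0 with hydef
  have hx : 0 < x := by rw [hxdef]; positivity
  have hxy : x ≤ y := by
    apply add_le_add le_rfl
    exact max_le_max (by linarith) le_rfl
  have hyx : y - x ≤ t := by
    have h1 : max (t - u) 0 ≤ max (-u) 0 + t := by
      apply max_le
      · have := le_max_left (-u) 0; linarith
      · have := le_max_right (-u) 0; linarith
    rw [hxdef, hydef]; linarith
  have hb := mvn_rpow_mvt (by linarith : d < 1) hx hxy
  rw [abs_of_neg hd2] at hb
  have habs : |modMvN a d t u| = |y ^ d - x ^ d| := by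
    rw [modMvN, abs_sub_comm]
  rw [habs]
  have hxp : (0:ℝ) ≤ x ^ (d - 1) := Real.rpow_nonneg hx.le _
  nlinarith [mul_nonneg (neg_nonneg.2 hd2.le) hxp]

lemma mvn_integrableOn_Iic (ha : 0 < a) {q : ℝ} (hq : q < -1) :
    IntegrableOn (fun u : ℝ => (a - u) ^ q) (Iic (0:ℝ)) := by
  have h1 : IntegrableOn (fun x : ℝ => x ^ q) (Ioi a) := integrableOn_Ioi_rpow_of_lt hq ha
  have h2 : Integrable (Set.indicator (Ioi a) fun x : ℝ => x ^ q) :=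
    (integrable_indicator_iff measurableSet_Ioi).2 h1
  have h3 := h2.comp_sub_left a
  have h4 : (fun u : ℝ => Set.indicator (Ioi a) (fun x : ℝ => x ^ q) (a - u))
      = Set.indicator (Iio 0) (fun u : ℝ => (a - u) ^ q) := by
    funext u
    by_cases hu : u < 0
    · rw [Set.indicator_of_mem (by simp only [mem_Ioi]; linarith),
        Set.indicator_of_mem (mem_Iio.2 hu)]
    · rw [Set.indicator_of_notMem (by simp only [mem_Ioi]; push_neg at hu ⊢; linarith),
        Set.indicator_of_notMem (by simpa using hu)]
  rw [h4] at h3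
  rw [integrableOn_Iic_iff_integrableOn_Iio]
  exact (integrable_indicator_iff measurableSet_Iio).1 h3

lemma mvn_integrable_bound (ha : 0 < a) {q : ℝ} (hq : q < -1) {t : ℝ} (ht : 0 ≤ t) :
    IntegrableOn (fun u : ℝ => (a + max (-u) 0) ^ q) (Iic t) := by
  have h1 : IntegrableOn (fun u : ℝ => (a + max (-u) 0) ^ q) (Iic 0) := by
    refine (mvn_integrableOn_Iic ha hq).congr_fun (fun u hu => ?_) measurableSet_Iic
    rw [max_eq_left (neg_nonneg.2 hu), ← sub_eq_add_neg]
  have h2 : IntegrableOn (fun u : ℝ => (a + max (-u) 0) ^ q) (Ioc 0 t) := by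
    refine ((integrableOn_const (C := a ^ q) (μ := volume) (s := Ioc 0 t) measure_Ioc_lt_top.ne)).congr_fun
      (fun u hu => ?_) measurableSet_Ioc
    rw [max_eq_right (neg_nonpos.2 hu.1.le), add_zero]
  exact (h1.union h2).mono_set (fun u hu => by
    rcases le_or_gt u 0 with h | h
    · exact Or.inl h
    · exact Or.inr ⟨h, hu⟩)

lemma integrable_modMvN (ha : 0 < a) (hd2 : d < 0) {t : ℝ} (ht : 0 < t) :
    Integrable (fun u => modMvN a d t u) := by
  refine Integrable.mono'
    (g := Set.indicator (Iic t) (fun u => (-d) * t * (a + max (-u) 0) ^ (d - 1))) ?_ ?_ ?_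
  · exact (integrable_indicator_iff measurableSet_Iic).2
      (((mvn_integrable_bound ha (by linarith) ht.le)).const_mul _)
  · exact (continuous_modMvN ha t).aestronglyMeasurable
  · refine Filter.Eventually.of_forall (fun u => ?_)
    by_cases hu : u ≤ t
    · rw [Set.indicator_of_mem (Set.mem_Iic.2 hu), Real.norm_eq_abs]
      exact abs_modMvN_le ha hd2 ht.le hu
    · rw [Set.indicator_of_notMem (by simpa using hu), modMvN_of_ge ht.le (le_of_not_ge hu)]
      simp

lemma integrable_modMvN_sq (ha : 0 < a) (hd2 : d < 0) {t : ℝ} (ht : 0 < t) :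
    Integrable (fun u => (modMvN a d t u) ^ 2) := by
  refine Integrable.mono'
    (g := Set.indicator (Iic t)
      (fun u => ((-d) * t) ^ 2 * (a + max (-u) 0) ^ (2 * (d - 1)))) ?_ ?_ ?_
  · exact (integrable_indicator_iff measurableSet_Iic).2
      (((mvn_integrable_bound ha (by linarith) ht.le)).const_mul _)
  · exact ((continuous_modMvN ha t).pow 2).aestronglyMeasurable
  · refine Filter.Eventually.of_forall (fun u => ?_)
    by_cases hu : u ≤ t
    · rw [Set.indicator_of_mem (Set.mem_Iic.2 hu)]
      have hb := abs_modMvN_le ha hd2 ht.le hu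
      have hx : (0:ℝ) < a + max (-u) 0 := by positivity
      have hsq : |modMvN a d t u| ^ 2 ≤ ((-d) * t * (a + max (-u) 0) ^ (d - 1)) ^ 2 :=
        pow_le_pow_left₀ (abs_nonneg _) hb 2
      have hr2 : ((a + max (-u) 0) ^ (d - 1)) ^ 2 = (a + max (-u) 0) ^ (2 * (d - 1)) := by
        rw [sq, ← Real.rpow_add hx]; ring_nf
      calc ‖(modMvN a d t u) ^ 2‖ = |modMvN a d t u| ^ 2 := by
            rw [Real.norm_eq_abs, abs_pow, sq_abs, ← sq_abs]
        _ ≤ ((-d) * t * (a + max (-u) 0) ^ (d - 1)) ^ 2 := hsq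
        _ = ((-d) * t) ^ 2 * (a + max (-u) 0) ^ (2 * (d - 1)) := by
            rw [mul_pow, hr2]
    · rw [Set.indicator_of_notMem (by simpa using hu), modMvN_of_ge ht.le (le_of_not_ge hu)]
      simp

lemma modMvNI_shift (t c : ℝ) :
    ∫ u : ℝ, (modMvN a d t (u - c)) ^ 2 = modMvNI a d t :=
  integral_sub_right_eq_self (fun u => (modMvN a d t u) ^ 2) c

/-- Key algebraic identity: second difference of `I` equals twice the cross integral. -/
lemma mvn_key_identity (ha : 0 < a) (hd2 : d < 0) {r h : ℝ} (hr : 0 < r) (hh : 1 < h) :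
    modMvNI a d ((h + 1) * r) + modMvNI a d ((h - 1) * r) - 2 * modMvNI a d (h * r)
      = 2 * ∫ u : ℝ, modMvN a d r u * modMvN a d r (u - h * r) := by
  have ht1 : 0 < (h + 1) * r := mul_pos (by linarith) hr
  have htm : 0 < (h - 1) * r := mul_pos (by linarith) hr
  have ht0 : 0 < h * r := mul_pos (by linarith) hr
  have iA := integrable_modMvN_sq ha hd2 ht1
  have iB := (integrable_modMvN_sq ha hd2 htm).comp_sub_right r
  have iC := integrable_modMvN_sq ha hd2 ht0
  have iD := (integrable_modMvN_sq ha hd2 ht0).comp_sub_right r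
  have e0a : modMvNI a d ((h + 1) * r) = ∫ u : ℝ, (modMvN a d ((h + 1) * r) u) ^ 2 := rfl
  have e0c : modMvNI a d (h * r) = ∫ u : ℝ, (modMvN a d (h * r) u) ^ 2 := rfl
  have e1 : modMvNI a d ((h - 1) * r) = ∫ u : ℝ, (modMvN a d ((h - 1) * r) (u - r)) ^ 2 :=
    (modMvNI_shift _ _).symm
  have e2 : modMvNI a d (h * r) = ∫ u : ℝ, (modMvN a d (h * r) (u - r)) ^ 2 :=
    (modMvNI_shift _ _).symm
  have iAB : Integrable (fun u : ℝ => (modMvN a d ((h + 1) * r) u) ^ 2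
      + (modMvN a d ((h - 1) * r) (u - r)) ^ 2) := iA.add iB
  have iCD : Integrable (fun u : ℝ => (modMvN a d (h * r) u) ^ 2
      + (modMvN a d (h * r) (u - r)) ^ 2) := iC.add iD
  have lhs_eq : modMvNI a d ((h + 1) * r) + modMvNI a d ((h - 1) * r)
        - 2 * modMvNI a d (h * r)
      = ((∫ u : ℝ, (modMvN a d ((h + 1) * r) u) ^ 2)
          + ∫ u : ℝ, (modMvN a d ((h - 1) * r) (u - r)) ^ 2)
        - ((∫ u : ℝ, (modMvN a d (h * r) u) ^ 2)
          + ∫ u : ℝ, (modMvN a d (h * r) (u - r)) ^ 2) := by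
    linear_combination e0a + e1 - e0c - e2
  rw [lhs_eq, ← integral_add iA iB, ← integral_add iC iD, ← integral_sub iAB iCD,
    ← integral_const_mul]
  refine integral_congr_ae (Filter.Eventually.of_forall fun u => ?_)
  simp only []
  have m1 : -(u - r) = r - u := by ring
  have m2 : (h - 1) * r - (u - r) = h * r - u := by ring
  have m3 : h * r - (u - r) = (h + 1) * r - u := by ring
  have m4 : r - (u - h * r) = (h + 1) * r - u := by ring
  have m5 : -(u - h * r) = h * r - u := by ring
  simp only [modMvN, m1, m2, m3, m4, m5]
  ring

lemma mvn_tendsto_rpow_diff {p : ℝ} (hp : p < 1) {r : ℝ} (hr : 0 ≤ r) :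
    Tendsto (fun y : ℝ => (y + r) ^ p - y ^ p) atTop (nhds 0) := by
  apply squeeze_zero_norm' (a := fun y : ℝ => |p| * y ^ (p - 1) * r)
  · filter_upwards [eventually_gt_atTop 0] with y hy
    have h := mvn_rpow_mvt hp hy (by linarith : y ≤ y + r)
    rw [show y + r - y = r by ring] at h
    simpa [Real.norm_eq_abs] using h
  · have h1 := (tendsto_rpow_neg_atTop (show (0:ℝ) < 1 - p by linarith)).const_mul |p|
    have h2 := h1.mul_const r
    simp only [neg_sub] at h2
    simpa using h2

lemma mvn_integral_eq (ha : 0 < a) (hd1 : (-1:ℝ) < d) (hd2 : d < 0) {r : ℝ} (hr : 0 < r) :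
    ∫ u : ℝ, modMvN a d r u = a ^ d * r := by
  have hd1' : (0:ℝ) < d + 1 := by linarith
  have hint := integrable_modMvN ha hd2 hr
  rw [← intervalIntegral.integral_Iic_add_Ioi (b := (0:ℝ)) hint.integrableOn hint.integrableOn]
  have p1 : ∫ u in Iic (0:ℝ), modMvN a d r u = ((a + r) ^ (d+1) - a ^ (d+1)) / (d+1) := by
    have hEq : EqOn (fun u : ℝ => modMvN a d r u)
        (fun u : ℝ => (a - u) ^ d - (a + r - u) ^ d) (Iic 0) := by
      intro u hu
      simp only [modMvN]
      have hu' : u ≤ 0 := hu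
      rw [max_eq_left (neg_nonneg.2 hu'), max_eq_left (by linarith : (0:ℝ) ≤ r - u),
        show a + -u = a - u by ring, show a + (r - u) = a + r - u by ring]
    rw [setIntegral_congr_fun measurableSet_Iic hEq]
    set Φ : ℝ → ℝ := fun u => ((a + r - u) ^ (d+1) - (a - u) ^ (d+1)) / (d+1) with hΦ
    have hderiv : ∀ u ∈ Iic (0:ℝ), HasDerivAt Φ ((a - u) ^ d - (a + r - u) ^ d) u := by
      intro u hu
      have hu' : u ≤ 0 := hu
      have hb1 : (0:ℝ) < a + r - u := by linarith
      have hb2 : (0:ℝ) < a - u := by linarith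
      have d1 : HasDerivAt (fun v : ℝ => (a + r - v) ^ (d+1))
          (-1 * (d+1) * (a + r - u) ^ (d + 1 - 1)) u :=
        ((hasDerivAt_id u).const_sub (a + r)).rpow_const (Or.inl hb1.ne')
      have d2 : HasDerivAt (fun v : ℝ => (a - v) ^ (d+1))
          (-1 * (d+1) * (a - u) ^ (d + 1 - 1)) u :=
        ((hasDerivAt_id u).const_sub a).rpow_const (Or.inl hb2.ne')
      have h3 := (d1.sub d2).div_const (d+1)
      refine h3.congr_deriv ?_
      rw [show d + 1 - 1 = d by ring]
      field_simp
      ring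
    have hint' : IntegrableOn (fun u : ℝ => (a - u) ^ d - (a + r - u) ^ d) (Iic 0) :=
      hint.integrableOn.congr_fun hEq measurableSet_Iic
    have htend : Tendsto Φ atBot (nhds 0) := by
      have h1 : Tendsto (fun u : ℝ => a - u) atBot atTop := by
        simp only [sub_eq_add_neg]
        exact tendsto_atTop_add_const_left _ a tendsto_neg_atBot_atTop
      have h2 := (mvn_tendsto_rpow_diff (by linarith : d + 1 < 1) hr.le).comp h1
      have h3 : Φ = fun u : ℝ =>
          ((fun y : ℝ => (y + r) ^ (d+1) - y ^ (d+1)) (a - u)) / (d + 1) := by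
        funext u
        simp only [hΦ]
        rw [show a - u + r = a + r - u by ring]
      rw [h3]
      simpa using h2.div_const (d+1)
    rw [integral_Iic_of_hasDerivAt_of_tendsto' hderiv hint' htend]
    simp only [hΦ]
    norm_num
  have p2 : ∫ u in Ioi (0:ℝ), modMvN a d r u
      = a ^ d * r - ((a + r) ^ (d+1) - a ^ (d+1)) / (d+1) := by
    rw [← Set.Ioc_union_Ioi_eq_Ioi hr.le,
      setIntegral_union (Set.Ioc_disjoint_Ioi le_rfl) measurableSet_Ioi
        hint.integrableOn hint.integrableOn]
    have z1 : ∫ u in Ioi r, modMvN a d r u = 0 := by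
      rw [setIntegral_congr_fun measurableSet_Ioi
        (fun u (hu : u ∈ Ioi r) => modMvN_of_ge hr.le (le_of_lt hu))]
      simp
    have hEq2 : EqOn (fun u : ℝ => modMvN a d r u)
        (fun u : ℝ => a ^ d - (a + r - u) ^ d) (Ioc 0 r) := by
      intro u hu
      simp only [modMvN]
      rw [max_eq_right (neg_nonpos.2 hu.1.le), max_eq_left (by linarith [hu.2] : (0:ℝ) ≤ r - u),
        add_zero, show a + (r - u) = a + r - u by ring]
    rw [z1, add_zero, setIntegral_congr_fun measurableSet_Ioc hEq2,
      ← intervalIntegral.integral_of_le hr.le]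
    have iB' : IntervalIntegrable (fun u : ℝ => (a + r - u) ^ d) volume 0 r := by
      apply ContinuousOn.intervalIntegrable
      apply ContinuousOn.rpow_const (continuousOn_const.sub continuousOn_id)
      intro x hx
      rw [Set.uIcc_of_le hr.le] at hx
      exact Or.inl (show (0:ℝ) < a + r - x by linarith [hx.2]).ne'
    rw [intervalIntegral.integral_sub intervalIntegrable_const iB',
      intervalIntegral.integral_const]
    have hval : (∫ u in (0:ℝ)..r, (a + r - u) ^ d) = ((a+r)^(d+1) - a^(d+1))/(d+1) := by
      rw [intervalIntegral.integral_comp_sub_left (fun x : ℝ => x ^ d) (a + r),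
        show a + r - r = a by ring, show a + r - 0 = a + r by ring]
      exact integral_rpow (Or.inl hd1)
    rw [hval]
    simp only [smul_eq_mul, sub_zero]
    ring
  rw [p1, p2]
  ring

lemma mvn_tendsto_ratio (ha : 0 < a) (hd2 : d < 0) {r : ℝ} (hr : 0 < r) (u : ℝ) :
    Tendsto (fun h : ℝ => modMvN a d r (u - h * r) / (h * r + a) ^ (d - 1)) atTop
      (nhds (-d * r)) := by
  have main : Tendsto (fun Y : ℝ => ((Y - u) ^ d - (Y + (r - u)) ^ d) / Y ^ (d - 1))
      atTop (nhds (-d * r)) := by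
    set φ : ℝ → ℝ := fun t => (1 + (-u) * t) ^ d - (1 + (r - u) * t) ^ d with hφ
    have H : HasDerivAt φ (-d * r) 0 := by
      have h1 := (((hasDerivAt_id (0:ℝ)).const_mul (-u)).const_add 1).rpow_const
        (p := d) (Or.inl (by norm_num))
      have h2 := (((hasDerivAt_id (0:ℝ)).const_mul (r - u)).const_add 1).rpow_const
        (p := d) (Or.inl (by norm_num))
      have h3 := h1.sub h2
      refine h3.congr_deriv ?_
      norm_num
      ring
    rw [hasDerivAt_iff_tendsto_slope, slope_fun_def_field] at H
    have hφ0 : φ 0 = 0 := by simp [hφ]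
    have hinv : Tendsto (fun Y : ℝ => Y⁻¹) atTop (nhdsWithin (0:ℝ) {(0:ℝ)}ᶜ) := by
      apply tendsto_nhdsWithin_of_tendsto_nhds_of_eventually_within _ tendsto_inv_atTop_zero
      filter_upwards [eventually_gt_atTop 0] with Y hY
      exact inv_ne_zero hY.ne'
    have comp := H.comp hinv
    apply comp.congr'
    filter_upwards [eventually_gt_atTop (|u| + r + 1)] with Y hY
    have hY0 : (0:ℝ) < Y := lt_of_le_of_lt (by positivity) hY
    have hb1 : (0:ℝ) < 1 + (-u) * Y⁻¹ := by
      have h' : |(-u) * Y⁻¹| < 1 := by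
        rw [abs_mul, abs_neg, abs_inv, abs_of_pos hY0, ← div_eq_mul_inv, div_lt_one hY0]
        linarith
      linarith [neg_abs_le ((-u) * Y⁻¹)]
    have hb2 : (0:ℝ) < 1 + (r - u) * Y⁻¹ := by
      have h'' : |r - u| ≤ r + |u| := by
        have := abs_sub r u
        rwa [abs_of_pos hr] at this
      have h' : |(r - u) * Y⁻¹| < 1 := by
        rw [abs_mul, abs_inv, abs_of_pos hY0, ← div_eq_mul_inv, div_lt_one hY0]
        linarith
      linarith [neg_abs_le ((r - u) * Y⁻¹)]
    simp only [Function.comp]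
    rw [hφ0]
    have e1 : (Y - u) ^ d = Y ^ d * (1 + (-u) * Y⁻¹) ^ d := by
      rw [← Real.mul_rpow hY0.le hb1.le]
      congr 1
      field_simp
      try ring
    have e2 : (Y + (r - u)) ^ d = Y ^ d * (1 + (r - u) * Y⁻¹) ^ d := by
      rw [← Real.mul_rpow hY0.le hb2.le]
      congr 1
      field_simp
      try ring
    have e3 : Y ^ d = Y ^ (d - 1) * Y := by
      have h := Real.rpow_add_one hY0.ne' (d - 1)
      rw [show d - 1 + 1 = d by ring] at h
      exact h
    have hpow : Y ^ (d-1) ≠ 0 := (Real.rpow_pos_of_pos hY0 _).ne'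
    simp only [hφ]
    rw [sub_zero, sub_zero, e1, e2, e3]
    field_simp
  have hY : Tendsto (fun h : ℝ => h * r + a) atTop atTop :=
    tendsto_atTop_add_const_right _ a (tendsto_id.atTop_mul_const hr)
  have comp := main.comp hY
  apply comp.congr'
  filter_upwards [eventually_ge_atTop (u / r)] with h hh
  have hu' : u ≤ h * r := (div_le_iff₀ hr).1 hh
  show ((h * r + a - u) ^ d - ((h * r + a) + (r - u)) ^ d) / (h * r + a) ^ (d - 1)
      = modMvN a d r (u - h * r) / (h * r + a) ^ (d - 1)
  symm
  congr 1
  simp only [modMvN]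
  have A1 : a + max (-(u - h * r)) 0 = h * r + a - u := by
    rw [show -(u - h * r) = h * r - u by ring, max_eq_left (by linarith)]
    ring
  have A2 : a + max (r - (u - h * r)) 0 = h * r + a + (r - u) := by
    rw [show r - (u - h * r) = r - u + h * r by ring, max_eq_left (by linarith)]
    ring
  rw [A1, A2]


end Aux

/-- For `a > 0`, `d ∈ (-1/2, 0)` and fixed `r > 0`, with
`I(t) = ∫_ℝ f_{a,d}(t,u)² du`, one has
`lim_{h → ∞} (I((h+1)r) + I((h-1)r) - 2 I(hr)) / (hr+a)^{d-1} = 2 (-d) a^d r²`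
(limit over real `h → ∞`). -/
theorem modMvN_increment_covariance_asymptotic (a d r : ℝ) (ha : 0 < a)
    (hd : d ∈ Set.Ioo (-(1 / 2) : ℝ) 0) (hr : 0 < r) :
    Tendsto (fun h : ℝ =>
        (modMvNI a d ((h + 1) * r) + modMvNI a d ((h - 1) * r) - 2 * modMvNI a d (h * r))
          / (h * r + a) ^ (d - 1))
      atTop (nhds (2 * (-d) * a ^ d * r ^ 2)) := by
  obtain ⟨hd1, hd2⟩ := hd
  have hd1' : (-1:ℝ) < d := by linarith
  have hK0 : (0:ℝ) ≤ (-d) * r * 2 ^ (1 - d) :=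
    mul_nonneg (mul_nonneg (by linarith) hr.le) (Real.rpow_nonneg (by norm_num) _)
  have hDCT : Tendsto (fun h : ℝ => ∫ u : ℝ,
      modMvN a d r u * (modMvN a d r (u - h * r) / (h * r + a) ^ (d - 1))) atTop
      (nhds (∫ u : ℝ, modMvN a d r u * (-d * r))) := by
    apply MeasureTheory.tendsto_integral_filter_of_dominated_convergence
      (bound := fun u => (-d) * r * 2 ^ (1 - d) * |modMvN a d r u|)
    · apply Filter.Eventually.of_forall; intro h
      exact ((continuous_modMvN ha r).mul (((continuous_modMvN ha r).comp
        (continuous_id.sub continuous_const)).div_const _)).aestronglyMeasurable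
    · filter_upwards [eventually_ge_atTop 2] with h hh
      apply Filter.Eventually.of_forall; intro u
      by_cases hur : r ≤ u
      · rw [modMvN_of_ge hr.le hur]
        simp only [zero_mul, norm_zero]
        exact mul_nonneg hK0 (abs_nonneg _)
      · push_neg at hur
        have h2r : 2 * r ≤ h * r := mul_le_mul_of_nonneg_right hh hr.le
        have hY : (0:ℝ) < h * r + a := by nlinarith
        have e1 : modMvN a d r (u - h * r)
            = (a + (h * r - u)) ^ d - (a + ((h + 1) * r - u)) ^ d := by
          simp only [modMvN]
          rw [show -(u - h * r) = h * r - u by ring,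
            show r - (u - h * r) = (h+1) * r - u by ring,
            max_eq_left (by nlinarith), max_eq_left (by nlinarith)]
        have hxpos : (0:ℝ) < a + (h * r - u) := by nlinarith
        have hxy : a + (h * r - u) ≤ a + ((h + 1) * r - u) := by nlinarith
        have hψ0 : 0 ≤ modMvN a d r (u - h * r) := by
          rw [e1]; exact mvn_rpow_nonneg_sub hd2 hxpos hxy
        have hb := mvn_rpow_sub_rpow_le hd2 hxpos hxy
        rw [show a + ((h+1) * r - u) - (a + (h * r - u)) = r by ring] at hb
        have h2 : (h * r + a) / 2 ≤ a + (h * r - u) := by nlinarith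
        have h3 : (a + (h * r - u)) ^ (d - 1) ≤ ((h * r + a) / 2) ^ (d - 1) :=
          Real.rpow_le_rpow_of_nonpos (by positivity) h2 (by linarith)
        have h4 : ((h * r + a) / 2) ^ (d-1) = (h * r + a) ^ (d-1) * 2 ^ (1-d) := by
          rw [Real.div_rpow hY.le (by norm_num : (0:ℝ) ≤ 2), div_eq_mul_inv,
            ← Real.rpow_neg (by norm_num : (0:ℝ) ≤ 2), show -(d-1) = 1 - d by ring]
        have hc : (0:ℝ) < (h * r + a) ^ (d - 1) := Real.rpow_pos_of_pos hY _
        have hψ2 : modMvN a d r (u - h * r)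
            ≤ (-d) * ((h*r+a)^(d-1) * 2^(1-d)) * r := by
          rw [e1]
          refine hb.trans ?_
          have hd' : (0:ℝ) ≤ -d := by linarith
          have h5 := h3.trans_eq h4
          exact mul_le_mul_of_nonneg_right (mul_le_mul_of_nonneg_left h5 hd') hr.le
        have hdiv : modMvN a d r (u - h * r) / (h * r + a) ^ (d - 1)
            ≤ (-d) * r * 2 ^ (1-d) := by
          rw [div_le_iff₀ hc]
          refine hψ2.trans_eq ?_
          ring
        have hdiv0 : 0 ≤ modMvN a d r (u - h * r) / (h * r + a) ^ (d - 1) :=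
          div_nonneg hψ0 hc.le
        rw [Real.norm_eq_abs, abs_mul, abs_of_nonneg hdiv0]
        calc |modMvN a d r u| * (modMvN a d r (u - h*r) / (h*r+a)^(d-1))
            ≤ |modMvN a d r u| * ((-d) * r * 2^(1-d)) :=
              mul_le_mul_of_nonneg_left hdiv (abs_nonneg _)
          _ = (-d) * r * 2^(1-d) * |modMvN a d r u| := by ring
    · exact ((integrable_modMvN ha hd2 hr).abs).const_mul _
    · apply Filter.Eventually.of_forall; intro u
      by_cases hur : r ≤ u
      · have hz : modMvN a d r u = 0 := modMvN_of_ge hr.le hur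
        simp only [hz, zero_mul]
        exact tendsto_const_nhds
      · exact (mvn_tendsto_ratio ha hd2 hr u).const_mul _
  have hval : (∫ u : ℝ, modMvN a d r u * (-d * r)) = (a ^ d * r) * (-d * r) := by
    rw [MeasureTheory.integral_mul_const, mvn_integral_eq ha hd1' hd2 hr]
  rw [hval] at hDCT
  have final := hDCT.const_mul (2:ℝ)
  have hlim : (2:ℝ) * ((a ^ d * r) * (-d * r)) = 2 * (-d) * a ^ d * r ^ 2 := by ring
  rw [hlim] at final
  apply final.congr'
  filter_upwards [eventually_gt_atTop 1] with h hh
  have key := mvn_key_identity ha hd2 hr hh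
  have w1 : (fun u : ℝ => modMvN a d r u * (modMvN a d r (u - h*r) / (h*r+a)^(d-1)))
      = fun u : ℝ => (modMvN a d r u * modMvN a d r (u - h*r)) / (h*r+a)^(d-1) := by
    funext u; rw [mul_div_assoc]
  calc 2 * ∫ u : ℝ, modMvN a d r u * (modMvN a d r (u - h*r) / (h*r+a)^(d-1))
      = 2 * ∫ u : ℝ, (modMvN a d r u * modMvN a d r (u - h*r)) / (h*r+a)^(d-1) := by
        rw [w1]
    _ = 2 * ((∫ u : ℝ, modMvN a d r u * modMvN a d r (u - h*r)) / (h*r+a)^(d-1)) := by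
        rw [MeasureTheory.integral_div]
    _ = (2 * ∫ u : ℝ, modMvN a d r u * modMvN a d r (u - h*r)) / (h*r+a)^(d-1) := by
        ring
    _ = (modMvNI a d ((h + 1) * r) + modMvNI a d ((h - 1) * r) - 2 * modMvNI a d (h * r))
          / (h * r + a) ^ (d - 1) := by rw [← key]
end

section
/- Let a > 0 and d ∈ (−1/2, 0). Let F : ℝ → ℝ be measurable and locally bounded, and suppose there exist M > 0 and T < 0 such that |F(s)| ≤ M·|s| for all s ≤ T. Define Φ(t) = d·∫_ℝ ( (a + max(−s,0))^{d−1} − (a + max(t−s,0))^{d−1} )·F(s) ds − d·a^{d−1}·∫_0^t F(s) ds for t ∈ ℝ. Then Φ is continuous on ℝ. -/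
open MeasureTheory

/-- Mean value estimate for negative powers. -/
lemma my_abs_rpow_sub_rpow_le {p : ℝ} (hp : p < 0) {x y m : ℝ} (hm : 0 < m)
    (hmx : m ≤ x) (hmy : m ≤ y) : |x ^ p - y ^ p| ≤ (-p) * m ^ (p - 1) * |x - y| := by
  wlog hxy : x ≤ y generalizing x y
  · rw [abs_sub_comm, abs_sub_comm x y]
    exact this hmy hmx (le_of_not_ge hxy)
  rcases eq_or_lt_of_le hxy with rfl | hxy'
  · simp only [sub_self, abs_zero, mul_zero, le_refl]
  have hx0 : (0:ℝ) < x := lt_of_lt_of_le hm hmx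
  obtain ⟨c, hc, hceq⟩ := exists_hasDerivAt_eq_slope (fun u => u ^ p)
    (fun u => p * u ^ (p - 1)) hxy'
    (fun u hu => (Real.continuousAt_rpow_const u p
      (Or.inl (ne_of_gt (lt_of_lt_of_le hx0 hu.1)))).continuousWithinAt)
    (fun u hu => Real.hasDerivAt_rpow_const (Or.inl (ne_of_gt (lt_of_lt_of_le hx0 hu.1.le))))
  have hc0 : (0:ℝ) < c := lt_of_lt_of_le hx0 hc.1.le
  have key : y ^ p - x ^ p = p * c ^ (p - 1) * (y - x) := by
    rw [hceq, div_mul_cancel₀ _ (by linarith : y - x ≠ 0)]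
  have hyx : y ^ p ≤ x ^ p := Real.rpow_le_rpow_of_nonpos hx0 hxy hp.le
  have habs : |x ^ p - y ^ p| = x ^ p - y ^ p := abs_of_nonneg (by linarith)
  have hcm : c ^ (p - 1) ≤ m ^ (p - 1) :=
    Real.rpow_le_rpow_of_nonpos hm (hmx.trans hc.1.le) (by linarith)
  have hcp : 0 < c ^ (p - 1) := Real.rpow_pos_of_pos hc0 _
  rw [habs, abs_sub_comm, abs_of_nonneg (by linarith : (0:ℝ) ≤ y - x)]
  nlinarith [hcp, Real.rpow_pos_of_pos hm (p-1)]

lemma my_abs_sub_le_max {x y : ℝ} (hx : 0 ≤ x) (hy : 0 ≤ y) : |x - y| ≤ max x y := by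
  rcases le_total x y with h | h
  · rw [abs_of_nonpos (by linarith)]
    simp only [neg_sub]
    exact (sub_le_self _ hx).trans (le_max_right _ _)
  · rw [abs_of_nonneg (by linarith)]
    exact (sub_le_self _ hy).trans (le_max_left _ _)

lemma my_tail_integrable {r A c : ℝ} (hr : r < -1) (hAc : 0 < A - c) :
    Integrable ((Set.Iic c).indicator fun s => (A - s) ^ r) := by
  have h1 : IntegrableOn (fun x : ℝ => x ^ r) (Set.Ioi (A - c)) :=
    integrableOn_Ioi_rpow_of_lt hr hAc
  have h2 : Integrable ((Set.Ioi (A - c)).indicator fun x : ℝ => x ^ r) :=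
    (integrable_indicator_iff measurableSet_Ioi).mpr h1
  have h3 : Integrable fun s : ℝ =>
      (Set.Ioi (A - c)).indicator (fun x : ℝ => x ^ r) (A - s) :=
    (integrable_comp_sub_left ((Set.Ioi (A - c)).indicator fun x : ℝ => x ^ r) A).mpr h2
  have h4 : (fun s : ℝ => (Set.Ioi (A - c)).indicator (fun x : ℝ => x ^ r) (A - s))
      = (Set.Iio c).indicator fun s => (A - s) ^ r := by
    ext s
    simp only [Set.indicator_apply, Set.mem_Ioi, Set.mem_Iio, sub_lt_sub_iff_left]
  rw [h4] at h3
  refine h3.congr ?_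
  filter_upwards [compl_mem_ae_iff.mpr (measure_singleton c)] with s hs
  have hs' : s ≠ c := hs
  simp only [Set.indicator_apply, Set.mem_Iio, Set.mem_Iic]
  have : s < c ↔ s ≤ c := ⟨le_of_lt, fun h => lt_of_le_of_ne h hs'⟩
  by_cases h : s < c
  · simp [h, this.mp h]
  · rw [if_neg h, if_neg (fun hh => h (this.mpr hh))]


/-- The Riemann-integral representation `Φ` of the fractional subordinator built from `F`:
`Φ(t) = d ∫_ℝ ((a + max(-s,0))^{d-1} - (a + max(t-s,0))^{d-1}) F(s) ds
          - d a^{d-1} ∫_0^t F(s) ds`. -/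
noncomputable def fracSubPhi (a d : ℝ) (F : ℝ → ℝ) (t : ℝ) : ℝ :=
  d * (∫ s : ℝ, ((a + max (-s) 0) ^ (d - 1) - (a + max (t - s) 0) ^ (d - 1)) * F s)
    - d * a ^ (d - 1) * ∫ s in (0 : ℝ)..t, F s

/-- Let `a > 0`, `d ∈ (-1/2, 0)`, and let `F : ℝ → ℝ` be measurable and
locally bounded with `|F s| ≤ M |s|` for all `s ≤ T` (with `M > 0`, `T < 0`).
Then `Φ` is continuous on `ℝ`. -/
theorem fracSubPhi_continuous (a d : ℝ) (ha : 0 < a) (hd : d ∈ Set.Ioo (-(1 / 2) : ℝ) 0)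
    (F : ℝ → ℝ) (hFmeas : Measurable F)
    (hFloc : ∀ K : Set ℝ, IsCompact K → ∃ C : ℝ, ∀ s ∈ K, |F s| ≤ C)
    (M T : ℝ) (hM : 0 < M) (hT : T < 0) (hbound : ∀ s ≤ T, |F s| ≤ M * |s|) :
    Continuous (fracSubPhi a d F) := by
  obtain ⟨hd1, hd0⟩ := hd
  have hFint : ∀ u v : ℝ, IntervalIntegrable F volume u v := by
    intro u v
    obtain ⟨C, hC⟩ := hFloc (Set.uIcc u v) isCompact_uIcc
    refine (Measure.integrableOn_of_bounded (M := C) (isCompact_uIcc.measure_lt_top).ne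
      hFmeas.aestronglyMeasurable ?_).intervalIntegrable
    exact (ae_restrict_iff' measurableSet_uIcc).mpr (ae_of_all _ fun s hs => by
      rw [Real.norm_eq_abs]; exact hC s hs)
  have hJ : Continuous fun t => ∫ s in (0:ℝ)..t, F s :=
    intervalIntegral.continuous_primitive hFint 0
  have hI : Continuous fun t => ∫ s : ℝ,
      ((a + max (-s) 0) ^ (d - 1) - (a + max (t - s) 0) ^ (d - 1)) * F s := by
    rw [continuous_iff_continuousAt]
    intro t₀
    set B : ℝ := |t₀| + 1 with hBdef
    have hB : 0 < B := by positivity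
    set c : ℝ := min T (-(2*B + 2*a + 1)) with hcdef
    have hcT : c ≤ T := min_le_left _ _
    have hcB : c ≤ -(2*B + 2*a + 1) := min_le_right _ _
    have hc0 : c < 0 := lt_of_le_of_lt hcB (by linarith)
    obtain ⟨C, hC⟩ := hFloc (Set.Icc c B) isCompact_Icc
    have hC0 : 0 ≤ C := le_trans (abs_nonneg _) (hC 0 ⟨hc0.le, hB.le⟩)
    set K₁ : ℝ := 2*(1-d)*B*M with hK1def
    have hK1 : 0 < K₁ := by
      apply mul_pos (mul_pos (mul_pos two_pos (by linarith)) hB) hM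
    set g : ℝ → ℝ := fun s => K₁ * (Set.Iic c).indicator (fun s => (a - B - s) ^ (d-1)) s
      + (Set.Ioc c B).indicator (fun _ => a ^ (d-1) * C) s with hgdef
    have hgint : Integrable g := by
      refine Integrable.add (Integrable.const_mul ?_ _) ?_
      · exact my_tail_integrable (by linarith) (by linarith)
      · exact (integrable_indicator_iff measurableSet_Ioc).mpr
          ((integrableOn_const_iff enorm_ne_top).mpr (Or.inr measure_Ioc_lt_top))
    have hbase1 : ∀ s : ℝ, (0:ℝ) < a + max (-s) 0 := fun s => by
      have := le_max_right (-s) 0; linarith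
    have hbase2 : ∀ t s : ℝ, (0:ℝ) < a + max (t - s) 0 := fun t s => by
      have := le_max_right (t - s) 0; linarith
    have hcont1 : Continuous fun s : ℝ => (a + max (-s) 0) ^ (d - 1) := by
      refine Continuous.rpow_const ?_ fun s => Or.inl (ne_of_gt (hbase1 s))
      exact continuous_const.add (continuous_neg.max continuous_const)
    have hmeas : ∀ᶠ t in nhds t₀, AEStronglyMeasurable
        (fun s : ℝ => ((a + max (-s) 0) ^ (d - 1) - (a + max (t - s) 0) ^ (d - 1)) * F s)
        volume := by
      refine Filter.Eventually.of_forall fun t => ?_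
      have hcont2 : Continuous fun s : ℝ => (a + max (t - s) 0) ^ (d - 1) := by
        refine Continuous.rpow_const ?_ fun s => Or.inl (ne_of_gt (hbase2 t s))
        exact continuous_const.add ((continuous_const.sub continuous_id).max continuous_const)
      exact ((hcont1.sub hcont2).measurable.mul hFmeas).aestronglyMeasurable
    have hcontt : ∀ᵐ s : ℝ ∂volume, ContinuousAt
        (fun t : ℝ => ((a + max (-s) 0) ^ (d - 1) - (a + max (t - s) 0) ^ (d - 1)) * F s)
        t₀ := by
      refine ae_of_all _ fun s => ?_
      have hcont3 : Continuous fun t : ℝ => (a + max (t - s) 0) ^ (d - 1) := by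
        refine Continuous.rpow_const ?_ fun t => Or.inl (ne_of_gt (hbase2 t s))
        exact continuous_const.add ((continuous_id.sub continuous_const).max continuous_const)
      exact ((continuous_const.sub hcont3).mul continuous_const).continuousAt
    have hbd : ∀ᶠ t in nhds t₀, ∀ᵐ s : ℝ ∂volume,
        ‖((a + max (-s) 0) ^ (d - 1) - (a + max (t - s) 0) ^ (d - 1)) * F s‖ ≤ g s := by
      refine Filter.eventually_iff_exists_mem.mpr ⟨Metric.ball t₀ 1,
        Metric.ball_mem_nhds t₀ one_pos, fun t ht => ae_of_all _ fun s => ?_⟩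
      have htB : |t| ≤ B := by
        have h1 : |t - t₀| < 1 := by rwa [Metric.mem_ball, Real.dist_eq] at ht
        have h2 := abs_sub_abs_le_abs_sub t t₀
        rw [hBdef]; linarith
      have htlo : -B ≤ t := (abs_le.mp htB).1
      have hthi : t ≤ B := (abs_le.mp htB).2
      rw [Real.norm_eq_abs, abs_mul]
      rcases le_or_gt s c with hsc | hsc
      · -- tail case
        have hs0 : s < 0 := lt_of_le_of_lt hsc hc0
        have hmaxs : max (-s) 0 = -s := max_eq_left (by linarith)
        have hts : (0:ℝ) < t - s := by linarith
        have hmaxt : max (t - s) 0 = t - s := max_eq_left hts.le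
        have hm : (0:ℝ) < a - B - s := by linarith
        have hkey := my_abs_rpow_sub_rpow_le (p := d - 1) (by linarith) hm
          (x := a + -s) (y := a + (t - s)) (by linarith) (by linarith)
        have hdiff : |(a + -s) - (a + (t - s))| = |t| := by
          rw [show (a + -s) - (a + (t - s)) = -t by ring, abs_neg]
        rw [hdiff] at hkey
        have hpw : (0:ℝ) ≤ (a - B - s) ^ (d - 1 - 1) := Real.rpow_nonneg hm.le _
        have h1 : |(a + -s) ^ (d-1) - (a + (t - s)) ^ (d-1)|
            ≤ (1 - d) * (a - B - s) ^ (d - 1 - 1) * B := by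
          refine hkey.trans ?_
          rw [show -(d-1) = 1 - d by ring]
          exact mul_le_mul_of_nonneg_left htB (mul_nonneg (by linarith) hpw)
        have hFs : |F s| ≤ M * (-s) := by
          have := hbound s (hsc.trans hcT)
          rwa [abs_of_neg hs0] at this
        have hprod : |(a + -s) ^ (d-1) - (a + (t - s)) ^ (d-1)| * |F s|
            ≤ ((1 - d) * (a - B - s) ^ (d - 1 - 1) * B) * (M * (-s)) := by
          exact mul_le_mul h1 hFs (abs_nonneg _)
            (mul_nonneg (mul_nonneg (by linarith) hpw) hB.le)
        have hsle : -s ≤ 2 * (a - B - s) := by linarith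
        have hXX : (a - B - s) ^ (d - 1 - 1) * (a - B - s) = (a - B - s) ^ (d - 1) := by
          rw [← Real.rpow_add_one hm.ne' (d - 1 - 1)]
          norm_num
        have hfin : ((1 - d) * (a - B - s) ^ (d - 1 - 1) * B) * (M * (-s))
            ≤ K₁ * (a - B - s) ^ (d - 1) := by
          rw [hK1def, ← hXX]
          have hkey2 := mul_le_mul_of_nonneg_left hsle
            (mul_nonneg (mul_nonneg (mul_nonneg (by linarith : (0:ℝ) ≤ 1 - d) hpw) hB.le) hM.le)
          nlinarith [hkey2]
        have hgs : g s = K₁ * (a - B - s) ^ (d - 1) := by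
          rw [hgdef]
          simp only
          rw [Set.indicator_of_mem (Set.mem_Iic.mpr hsc),
            Set.indicator_of_notMem (fun hh => absurd hh.1 (not_lt.mpr hsc)), add_zero]
        rw [hmaxs, hmaxt, hgs]
        exact (hprod.trans hfin)
      · rcases le_or_gt s B with hsB | hsB
        · -- middle case
          have hx : (a + max (-s) 0) ^ (d-1) ≤ a ^ (d-1) :=
            Real.rpow_le_rpow_of_nonpos ha (le_add_of_nonneg_right (le_max_right _ _))
              (by linarith)
          have hy : (a + max (t - s) 0) ^ (d-1) ≤ a ^ (d-1) :=
            Real.rpow_le_rpow_of_nonpos ha (le_add_of_nonneg_right (le_max_right _ _))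
              (by linarith)
          have hxp : (0:ℝ) ≤ (a + max (-s) 0) ^ (d-1) := Real.rpow_nonneg (hbase1 s).le _
          have hyp : (0:ℝ) ≤ (a + max (t - s) 0) ^ (d-1) := Real.rpow_nonneg (hbase2 t s).le _
          have hker : |(a + max (-s) 0) ^ (d-1) - (a + max (t - s) 0) ^ (d-1)| ≤ a ^ (d-1) :=
            (my_abs_sub_le_max hxp hyp).trans (max_le hx hy)
          have hprod : |(a + max (-s) 0) ^ (d-1) - (a + max (t - s) 0) ^ (d-1)| * |F s|
              ≤ a ^ (d-1) * C :=
            mul_le_mul hker (hC s ⟨hsc.le, hsB⟩) (abs_nonneg _) (Real.rpow_nonneg ha.le _)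
          have hgs : g s = a ^ (d-1) * C := by
            rw [hgdef]
            simp only
            rw [Set.indicator_of_notMem (fun hh => absurd (Set.mem_Iic.mp hh) (not_le.mpr hsc)),
              Set.indicator_of_mem (Set.mem_Ioc.mpr ⟨hsc, hsB⟩), mul_zero, zero_add]
          rw [hgs]
          exact hprod
        · -- far right case
          have hmaxs : max (-s) 0 = 0 := max_eq_right (by linarith)
          have hmaxt : max (t - s) 0 = 0 := max_eq_right (by linarith)
          have hgs : g s = 0 := by
            rw [hgdef]
            simp only
            rw [Set.indicator_of_notMem (fun hh => absurd (Set.mem_Iic.mp hh)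
                (not_le.mpr (by linarith))),
              Set.indicator_of_notMem (fun hh => absurd hh.2 (not_le.mpr hsB)),
              mul_zero, zero_add]
          rw [hmaxs, hmaxt, hgs, sub_self, abs_zero, zero_mul]
    exact MeasureTheory.continuousAt_of_dominated hmeas hbd hgint hcontt
  exact (continuous_const.mul hI).sub (continuous_const.mul hJ)
end

section
/- Let β₁ > 0 and α₁ > 0, let Y : ℝ → ℝ be continuous, and fix t ∈ ℝ. Suppose lim_{s→−∞} (Y(t) − Y(s)) / (t − s) = 0. Define X(u) = β₁·u − α₁·Y(u) for u ∈ ℝ. Then the function s ↦ exp(−(X(t) − X(s))) is Lebesgue-integrable on the interval (−∞, t]. -/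
open MeasureTheory Filter

lemma exp_mul_integrableOn_Iic {c : ℝ} (hc : 0 < c) (M : ℝ) :
    IntegrableOn (fun s => Real.exp (c * s)) (Set.Iic M) := by
  have h : IntegrableOn Real.exp (Set.Iic (c * M)) volume := integrableOn_exp_Iic (c * M)
  rw [← integrable_indicator_iff measurableSet_Iic] at h
  have h2 := h.comp_mul_left' (R := c) hc.ne'
  have heq : (fun x => Set.indicator (Set.Iic (c * M)) Real.exp (c * x)) =
      Set.indicator (Set.Iic M) (fun s => Real.exp (c * s)) := by
    funext x
    by_cases hx : x ≤ M
    · rw [Set.indicator_of_mem (show c * x ∈ Set.Iic (c * M) from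
        mul_le_mul_of_nonneg_left hx hc.le), Set.indicator_of_mem (show x ∈ Set.Iic M from hx)]
    · rw [Set.indicator_of_notMem (show c * x ∉ Set.Iic (c * M) from
        fun hmem => hx (le_of_mul_le_mul_left hmem hc)),
        Set.indicator_of_notMem (show x ∉ Set.Iic M from hx)]
  rw [heq] at h2
  exact (integrable_indicator_iff measurableSet_Iic).mp h2

/-- Let `β₁ > 0`, `α₁ > 0`, `Y : ℝ → ℝ` continuous, and `t ∈ ℝ` with
`lim_{s → -∞} (Y t - Y s)/(t - s) = 0`. With `X u = β₁ u - α₁ Y u`, the function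
`s ↦ exp(-(X t - X s))` is Lebesgue-integrable on `(-∞, t]`. -/
theorem ficogarch_exp_integrable (β₁ α₁ : ℝ) (hβ : 0 < β₁) (hα : 0 < α₁)
    (Y : ℝ → ℝ) (hY : Continuous Y) (t : ℝ)
    (hlim : Tendsto (fun s : ℝ => (Y t - Y s) / (t - s)) atBot (nhds 0)) :
    IntegrableOn
      (fun s : ℝ => Real.exp (-((β₁ * t - α₁ * Y t) - (β₁ * s - α₁ * Y s))))
      (Set.Iic t) volume := by
  set f : ℝ → ℝ := fun s => Real.exp (-((β₁ * t - α₁ * Y t) - (β₁ * s - α₁ * Y s))) with hf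
  have hfc : Continuous f := by
    apply Real.continuous_exp.comp
    continuity
  have hε : (0:ℝ) < β₁ / (2 * α₁) := by positivity
  have hev : ∀ᶠ s in atBot, |(Y t - Y s) / (t - s)| < β₁ / (2 * α₁) := by
    have h0 : ∀ᶠ x in nhds (0:ℝ), |x| < β₁ / (2 * α₁) :=
      eventually_abs_sub_lt 0 hε |>.mono (by intro x hx; simpa using hx)
    exact hlim.eventually h0
  rw [eventually_atBot] at hev
  obtain ⟨M₀, hM₀⟩ := hev
  set M : ℝ := min M₀ (t - 1) with hM
  have hMt : M ≤ t := le_trans (min_le_right _ _) (by linarith)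
  -- pointwise bound on Iic M
  have hbound : ∀ s ≤ M, f s ≤ Real.exp (-(β₁/2) * t) * Real.exp ((β₁/2) * s) := by
    intro s hs
    have hs0 : s ≤ M₀ := le_trans hs (min_le_left _ _)
    have hst : s ≤ t - 1 := le_trans hs (min_le_right _ _)
    have hts : (0:ℝ) < t - s := by linarith
    have habs := hM₀ s hs0
    have hq : (Y t - Y s) / (t - s) ≤ β₁ / (2 * α₁) := le_of_lt (lt_of_abs_lt habs)
    have hYY : Y t - Y s ≤ β₁ / (2 * α₁) * (t - s) := by
      rw [div_le_iff₀ hts] at hq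
      linarith
    have hα' : α₁ * (Y t - Y s) ≤ (β₁ / 2) * (t - s) := by
      have := mul_le_mul_of_nonneg_left hYY hα.le
      calc α₁ * (Y t - Y s) ≤ α₁ * (β₁ / (2 * α₁) * (t - s)) := this
        _ = (β₁ / 2) * (t - s) := by field_simp
    have hexp : -((β₁ * t - α₁ * Y t) - (β₁ * s - α₁ * Y s))
        ≤ -(β₁/2) * t + (β₁/2) * s := by nlinarith
    rw [← Real.exp_add]
    exact Real.exp_le_exp.mpr hexp
  have h1 : IntegrableOn f (Set.Iic M) volume := by
    have hg : IntegrableOn (fun s => Real.exp (-(β₁/2) * t) * Real.exp ((β₁/2) * s))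
        (Set.Iic M) volume :=
      (exp_mul_integrableOn_Iic (by positivity) M).const_mul _
    refine Integrable.mono' hg (hfc.aestronglyMeasurable.restrict) ?_
    filter_upwards [ae_restrict_mem measurableSet_Iic] with s hs
    rw [Real.norm_eq_abs, abs_of_pos (Real.exp_pos _)]
    exact hbound s hs
  have h2 : IntegrableOn f (Set.Icc M t) volume := hfc.integrableOn_Icc
  have hcover : Set.Iic t ⊆ Set.Iic M ∪ Set.Icc M t := by
    intro s hs
    rcases le_or_gt s M with h | h
    · exact Or.inl h
    · exact Or.inr ⟨h.le, hs⟩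
  exact (h1.union h2).mono_set hcover
end

section
/- Let α₀, α₁, β₁ > 0 and σ₀² > 0. Let Y : ℝ → ℝ be continuous and nondecreasing with Y(0) = 0, and let μ_Y denote its Lebesgue–Stieltjes measure. Define X(t) = β₁·t − α₁·Y(t) and σ²(t) = exp(−X(t))·( σ₀² + α₀·β₁·∫_0^t exp(X(s)) ds ) for t ≥ 0. Then for every t ≥ 0, σ²(t) = σ₀² − β₁·∫_0^t (σ²(s) − α₀) ds + α₁·∫_{(0,t]} σ²(s) dμ_Y(s). -/
open MeasureTheory Set Filter Topology


open MeasureTheory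

/-- The pathwise FICOGARCH(1,d,1) squared volatility:
`σ²(t) = exp(-X t) (σ₀² + α₀ β₁ ∫_0^t exp(X s) ds)` with `X u = β₁ u - α₁ Y u`. -/
noncomputable def ficogarchSigmaSq (α₀ α₁ β₁ σ₀sq : ℝ) (Y : ℝ → ℝ) (t : ℝ) : ℝ :=
  Real.exp (-(β₁ * t - α₁ * Y t)) *
    (σ₀sq + α₀ * β₁ * ∫ s in (0 : ℝ)..t, Real.exp (β₁ * s - α₁ * Y s))

lemma stieltjes_noatoms (Y : StieltjesFunction ℝ) (hYc : Continuous Y) :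
    ∀ r : ℝ, Y.measure {r} = 0 := by
  intro r
  rw [Y.measure_singleton]
  have h : Function.leftLim Y r = Y r :=
    (Y.mono.continuousWithinAt_Iio_iff_leftLim_eq).1 hYc.continuousAt.continuousWithinAt
  rw [h, sub_self, ENNReal.ofReal_zero]

lemma stieltjes_map_restrict (Y : StieltjesFunction ℝ) (hYc : Continuous Y) {a b : ℝ} (hab : a ≤ b) :
    Measure.map Y (Y.measure.restrict (Set.Ioc a b)) = volume.restrict (Set.Ioc (Y a) (Y b)) := by
  have hYm : Measurable Y := hYc.measurable
  have hfin : IsFiniteMeasure (Y.measure.restrict (Set.Ioc a b)) := by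
    constructor
    rw [Measure.restrict_apply_univ, Y.measure_Ioc]
    exact ENNReal.ofReal_lt_top
  have hfin2 : IsFiniteMeasure (Measure.map Y (Y.measure.restrict (Set.Ioc a b))) :=
    Measure.isFiniteMeasure_map _ _
  refine Measure.ext_of_Iic _ _ fun c => ?_
  rw [Measure.map_apply hYm measurableSet_Iic,
      Measure.restrict_apply (hYm measurableSet_Iic),
      Measure.restrict_apply measurableSet_Iic]
  rcases lt_or_ge c (Y a) with hc | hc
  · have h1 : Y ⁻¹' Iic c ∩ Ioc a b = ∅ := by
      ext s
      simp only [mem_inter_iff, mem_preimage, mem_Iic, mem_Ioc, mem_empty_iff_false, iff_false]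
      rintro ⟨h1, h2, h3⟩
      exact absurd (le_trans (Y.mono h2.le) h1) (not_le.2 hc)
    have h2 : Iic c ∩ Ioc (Y a) (Y b) = ∅ := by
      ext u
      simp only [mem_inter_iff, mem_Iic, mem_Ioc, mem_empty_iff_false, iff_false]
      rintro ⟨h1, h2, h3⟩
      exact absurd (h2.trans_le h1) (not_lt.2 hc.le)
    rw [h1, h2, measure_empty, measure_empty]
  rcases le_or_gt (Y b) c with hc2 | hc2
  · have h1 : Y ⁻¹' Iic c ∩ Ioc a b = Ioc a b := by
      apply inter_eq_self_of_subset_right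
      intro s hs
      exact le_trans (Y.mono hs.2) hc2
    have h2 : Iic c ∩ Ioc (Y a) (Y b) = Ioc (Y a) (Y b) := by
      apply inter_eq_self_of_subset_right
      intro u hu
      exact hu.2.trans hc2
    rw [h1, h2, Y.measure_Ioc, Real.volume_Ioc]
  · -- Y a ≤ c < Y b
    set S := {s | s ∈ Icc a b ∧ Y s ≤ c} with hS
    have hSne : S.Nonempty := ⟨a, ⟨le_refl a, hab⟩, hc⟩
    have hSbdd : BddAbove S := ⟨b, fun s hs => hs.1.2⟩
    have hScl : IsClosed S := by
      have : S = Icc a b ∩ {s | Y s ≤ c} := rfl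
      rw [this]
      exact isClosed_Icc.inter (isClosed_le hYc continuous_const)
    set m := sSup S with hm
    have hmS : m ∈ S := hScl.csSup_mem hSne hSbdd
    have hmb : m < b := by
      rcases lt_or_eq_of_le hmS.1.2 with h | h
      · exact h
      · exfalso; rw [h] at hmS; exact absurd hmS.2 (not_le.2 hc2)
    have hYmc : Y m = c := by
      by_contra h
      have hlt : Y m < c := lt_of_le_of_ne hmS.2 h
      have h1 : ∀ᶠ s in 𝓝 m, Y s < c := (hYc.tendsto m).eventually_lt_const hlt
      have h2 : ∀ᶠ s in 𝓝 m, s < b := eventually_lt_nhds hmb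
      have h3 : ∀ᶠ s in 𝓝[>] m, Y s < c ∧ s < b := ((h1.and h2).filter_mono nhdsWithin_le_nhds)
      obtain ⟨s, ⟨hs1, hs2⟩, hs3⟩ := (h3.and self_mem_nhdsWithin).exists
      have : s ∈ S := ⟨⟨hmS.1.1.trans hs3.le, hs2.le⟩, hs1.le⟩
      exact absurd (le_csSup hSbdd this) (not_le.2 hs3)
    have h1 : Y ⁻¹' Iic c ∩ Ioc a b = Ioc a m := by
      ext s
      simp only [mem_inter_iff, mem_preimage, mem_Iic, mem_Ioc]
      constructor
      · rintro ⟨h1, h2, h3⟩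
        exact ⟨h2, le_csSup hSbdd ⟨⟨h2.le, h3⟩, h1⟩⟩
      · rintro ⟨h2, h3⟩
        exact ⟨(Y.mono h3).trans (hYmc.le), h2, h3.trans hmS.1.2⟩
    have h2 : Iic c ∩ Ioc (Y a) (Y b) = Ioc (Y a) c := by
      ext u
      simp only [mem_inter_iff, mem_Iic, mem_Ioc]
      constructor
      · rintro ⟨h1, h2, h3⟩; exact ⟨h2, h1⟩
      · rintro ⟨h2, h3⟩; exact ⟨h3, h2, h3.trans hc2.le⟩
    rw [h1, h2, Y.measure_Ioc, Real.volume_Ioc, hYmc]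

lemma exp_stieltjes_int (Y : StieltjesFunction ℝ) (hYc : Continuous Y) (α₁ : ℝ) {r t : ℝ}
    (hrt : r ≤ t) :
    ∫ s in Set.Ioc r t, α₁ * Real.exp (α₁ * Y s) ∂Y.measure
      = Real.exp (α₁ * Y t) - Real.exp (α₁ * Y r) := by
  have hφ : Continuous (fun u : ℝ => α₁ * Real.exp (α₁ * u)) := by continuity
  have h1 : ∫ s in Set.Ioc r t, α₁ * Real.exp (α₁ * Y s) ∂Y.measure
      = ∫ u, α₁ * Real.exp (α₁ * u) ∂(Measure.map Y (Y.measure.restrict (Set.Ioc r t))) := by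
    rw [integral_map hYc.measurable.aemeasurable hφ.aestronglyMeasurable]
  rw [h1, stieltjes_map_restrict Y hYc hrt, ← intervalIntegral.integral_of_le (Y.mono hrt)]
  have hD : ∀ u : ℝ, HasDerivAt (fun u => Real.exp (α₁ * u)) (α₁ * Real.exp (α₁ * u)) u := by
    intro u
    have := ((hasDerivAt_id u).const_mul α₁).exp
    simpa [mul_comm] using this
  exact intervalIntegral.integral_eq_sub_of_hasDerivAt (fun u _ => hD u)
    (hφ.intervalIntegrable _ _)

lemma stieltjes_integrableOn_Ioc (Y : StieltjesFunction ℝ) {h : ℝ → ℝ} (hc : Continuous h)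
    {a b : ℝ} : IntegrableOn h (Set.Ioc a b) Y.measure := by
  haveI : IsFiniteMeasure (Y.measure.restrict (Set.Ioc a b)) := by
    constructor
    rw [Measure.restrict_apply_univ, Y.measure_Ioc]
    exact ENNReal.ofReal_lt_top
  refine ⟨hc.aestronglyMeasurable.restrict, ?_⟩
  rcases le_or_gt a b with hab | hab
  · obtain ⟨C, hC⟩ := isCompact_Icc.exists_bound_of_continuousOn (f := h) hc.continuousOn
    apply HasFiniteIntegral.of_bounded (C := C)
    filter_upwards [ae_restrict_mem measurableSet_Ioc] with x hx
    exact hC x (Set.Ioc_subset_Icc_self hx)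
  · rw [Set.Ioc_eq_empty hab.not_gt]
    simp [HasFiniteIntegral]

lemma ibp_stieltjes (Y : StieltjesFunction ℝ) (hYc : Continuous Y) (α₁ : ℝ)
    (V V' : ℝ → ℝ) (hV : ∀ s, HasDerivAt V (V' s) s) (hV' : Continuous V')
    {t : ℝ} (ht : 0 ≤ t) :
    V t * Real.exp (α₁ * Y t) = V 0 * Real.exp (α₁ * Y 0)
      + (∫ s in (0:ℝ)..t, V' s * Real.exp (α₁ * Y s))
      + α₁ * ∫ s in Set.Ioc 0 t, V s * Real.exp (α₁ * Y s) ∂Y.measure := by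
  haveI : NullSingletonClass Y.measure := ⟨stieltjes_noatoms Y hYc⟩
  set G : ℝ → ℝ := fun s => Real.exp (α₁ * Y s) with hGdef
  have hG : Continuous G := Real.continuous_exp.comp (continuous_const.mul hYc)
  have hVc : Continuous V := by
    rw [continuous_iff_continuousAt]; exact fun s => (hV s).continuousAt
  have hFTC : ∀ s : ℝ, ∫ r in (0:ℝ)..s, V' r = V s - V 0 := fun s =>
    intervalIntegral.integral_eq_sub_of_hasDerivAt (fun r _ => hV r)
      (hV'.intervalIntegrable _ _)
  set ν := Y.measure.restrict (Set.Ioc 0 t) with hνdef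
  set lv := (volume : Measure ℝ).restrict (Set.Ioc 0 t) with hlvdef
  haveI hνfin : IsFiniteMeasure ν := by
    constructor
    rw [hνdef, Measure.restrict_apply_univ, Y.measure_Ioc]
    exact ENNReal.ofReal_lt_top
  haveI hlvfin : IsFiniteMeasure lv := by
    constructor
    rw [hlvdef, Measure.restrict_apply_univ, Real.volume_Ioc]
    exact ENNReal.ofReal_lt_top
  set f : ℝ → ℝ → ℝ := fun s r => Set.indicator (Set.Ioc 0 s) V' r * (α₁ * G s) with hfdef
  -- integrability on the product
  have hmeas : Measurable (Function.uncurry f) := by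
    have hset : MeasurableSet {p : ℝ × ℝ | 0 < p.2 ∧ p.2 ≤ p.1} :=
      (measurableSet_lt measurable_const measurable_snd).inter
        (measurableSet_le measurable_snd measurable_fst)
    have hrw : Function.uncurry f = fun p : ℝ × ℝ =>
        Set.indicator {p : ℝ × ℝ | 0 < p.2 ∧ p.2 ≤ p.1}
          (fun p => V' p.2 * (α₁ * G p.1)) p := by
      ext p
      simp only [Function.uncurry, hfdef, Set.indicator_apply, Set.mem_Ioc, Set.mem_setOf_eq,
        ite_mul, zero_mul]
    rw [hrw]
    exact Measurable.indicator
      ((hV'.measurable.comp measurable_snd).mul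
        ((hG.measurable.comp measurable_fst).const_mul α₁)) hset
  have hbound : Integrable (Function.uncurry f) (ν.prod lv) := by
    obtain ⟨C₁, hC₁⟩ := isCompact_Icc.exists_bound_of_continuousOn
      (f := V') (s := Set.Icc (0:ℝ) t) hV'.continuousOn
    obtain ⟨C₂, hC₂⟩ := isCompact_Icc.exists_bound_of_continuousOn
      (f := fun s => α₁ * G s) (s := Set.Icc (0:ℝ) t) (continuous_const.mul hG).continuousOn
    have hC₁0 : 0 ≤ C₁ := le_trans (norm_nonneg _) (hC₁ 0 ⟨le_refl _, ht⟩)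
    refine ⟨hmeas.aestronglyMeasurable, ?_⟩
    apply HasFiniteIntegral.of_bounded (C := C₁ * C₂)
    have hprod : ν.prod lv = (Y.measure.prod volume).restrict
        ((Set.Ioc 0 t) ×ˢ (Set.Ioc 0 t)) := Measure.prod_restrict _ _
    rw [hprod]
    filter_upwards [ae_restrict_mem (measurableSet_Ioc.prod measurableSet_Ioc)] with p hp
    have hp1 : p.1 ∈ Set.Icc (0:ℝ) t := Set.Ioc_subset_Icc_self hp.1
    have hp2 : p.2 ∈ Set.Icc (0:ℝ) t := Set.Ioc_subset_Icc_self hp.2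
    have h1 : ‖Set.indicator (Set.Ioc 0 p.1) V' p.2‖ ≤ C₁ := by
      refine le_trans (norm_indicator_le_norm_self V' p.2) (hC₁ _ hp2)
    calc ‖Function.uncurry f p‖ = ‖Set.indicator (Set.Ioc 0 p.1) V' p.2‖ * ‖α₁ * G p.1‖ := by
          rw [Function.uncurry]; exact norm_mul _ _
      _ ≤ C₁ * C₂ := mul_le_mul h1 (hC₂ _ hp1) (norm_nonneg _) hC₁0
  have hswap : ∫ s, (∫ r, f s r ∂lv) ∂ν = ∫ r, (∫ s, f s r ∂ν) ∂lv :=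
    integral_integral_swap hbound
  -- LHS computation
  have hL : ∫ s, (∫ r, f s r ∂lv) ∂ν
      = ∫ s in Set.Ioc 0 t, (V s - V 0) * (α₁ * G s) ∂Y.measure := by
    refine setIntegral_congr_fun measurableSet_Ioc fun s hs => ?_
    rw [hfdef]
    simp only
    rw [integral_mul_const, hlvdef, integral_indicator measurableSet_Ioc,
      Measure.restrict_restrict measurableSet_Ioc,
      Set.inter_eq_self_of_subset_left (Set.Ioc_subset_Ioc_right hs.2),
      ← intervalIntegral.integral_of_le hs.1.le, hFTC s]
  have hL2 : ∫ s in Set.Ioc 0 t, (V s - V 0) * (α₁ * G s) ∂Y.measure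
      = α₁ * (∫ s in Set.Ioc 0 t, V s * G s ∂Y.measure) - V 0 * (G t - G 0) := by
    have h1 : ∀ s : ℝ, (V s - V 0) * (α₁ * G s)
        = α₁ * (V s * G s) - V 0 * (α₁ * G s) := fun s => by ring
    simp_rw [h1]
    rw [integral_sub, integral_const_mul, integral_const_mul,
      exp_stieltjes_int Y hYc α₁ ht]
    · exact (stieltjes_integrableOn_Ioc Y (continuous_const.mul (hVc.mul hG)))
    · exact (stieltjes_integrableOn_Ioc Y (continuous_const.mul (continuous_const.mul hG)))
  -- RHS computation
  have hR : ∫ r, (∫ s, f s r ∂ν) ∂lv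
      = ∫ r in Set.Ioc 0 t, V' r * (G t - G r) := by
    refine setIntegral_congr_fun measurableSet_Ioc fun r hr => ?_
    have hfe : ∀ s : ℝ, f s r = Set.indicator (Set.Ici r) (fun s => V' r * (α₁ * G s)) s := by
      intro s
      rw [hfdef]
      simp only [Set.indicator_apply, Set.mem_Ioc, Set.mem_Ici, ite_mul, zero_mul]
      by_cases h : r ≤ s
      · simp [h, hr.1]
      · simp [h]
    simp_rw [hfe]
    rw [hνdef, integral_indicator measurableSet_Ici,
      Measure.restrict_restrict measurableSet_Ici]
    have hint : Set.Ici r ∩ Set.Ioc 0 t = Set.Icc r t := by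
      ext x
      simp only [Set.mem_inter_iff, Set.mem_Ici, Set.mem_Ioc, Set.mem_Icc]
      exact ⟨fun ⟨h1, _, h3⟩ => ⟨h1, h3⟩, fun ⟨h1, h2⟩ => ⟨h1, hr.1.trans_le h1, h2⟩⟩
    rw [hint, ← restrict_Ioc_eq_restrict_Icc, integral_const_mul,
      exp_stieltjes_int Y hYc α₁ hr.2]
  have hR2 : ∫ r in Set.Ioc 0 t, V' r * (G t - G r)
      = (V t - V 0) * G t - ∫ s in (0:ℝ)..t, V' s * G s := by
    rw [← intervalIntegral.integral_of_le ht]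
    have h1 : ∀ r : ℝ, V' r * (G t - G r) = V' r * G t - V' r * G r := fun r => by ring
    simp_rw [h1]
    rw [intervalIntegral.integral_sub, intervalIntegral.integral_mul_const, hFTC t]
    · exact ((hV'.mul continuous_const).intervalIntegrable _ _)
    · exact ((hV'.mul hG).intervalIntegrable _ _)
  have := hswap
  rw [hL, hL2, hR, hR2] at this
  have hgoal : α₁ * (∫ s in Set.Ioc 0 t, V s * G s ∂Y.measure)
      = V t * G t - V 0 * G 0 - ∫ s in (0:ℝ)..t, V' s * G s := by linarith
  linarith [hgoal]

/-- Let `α₀, α₁, β₁ > 0`, `σ₀² > 0`, and let `Y` be a continuous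
nondecreasing (Stieltjes) function with `Y 0 = 0`, with Lebesgue–Stieltjes measure `μ_Y`.
Then for every `t ≥ 0`,
`σ²(t) = σ₀² - β₁ ∫_0^t (σ²(s) - α₀) ds + α₁ ∫_{(0,t]} σ²(s) dμ_Y(s)`. -/
theorem ficogarch_sigmaSq_solves_sde (α₀ α₁ β₁ σ₀sq : ℝ)
    (hα₀ : 0 < α₀) (hα₁ : 0 < α₁) (hβ₁ : 0 < β₁) (hσ : 0 < σ₀sq)
    (Y : StieltjesFunction ℝ) (hYcont : Continuous Y) (hY0 : Y 0 = 0) :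
    ∀ t : ℝ, 0 ≤ t →
      ficogarchSigmaSq α₀ α₁ β₁ σ₀sq Y t =
        σ₀sq - β₁ * (∫ s in (0 : ℝ)..t, (ficogarchSigmaSq α₀ α₁ β₁ σ₀sq Y s - α₀))
          + α₁ * ∫ s in Set.Ioc 0 t, ficogarchSigmaSq α₀ α₁ β₁ σ₀sq Y s ∂Y.measure := by
  intro t ht
  set g : ℝ → ℝ := fun u => Real.exp (β₁ * u - α₁ * Y u) with hgdef
  have hgc : Continuous g := Real.continuous_exp.comp
    ((continuous_const.mul continuous_id).sub (continuous_const.mul hYcont))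
  set F : ℝ → ℝ := fun s => ∫ u in (0:ℝ)..s, g u with hFdef
  have hF : ∀ s : ℝ, HasDerivAt F (g s) s := by
    intro s
    exact intervalIntegral.integral_hasDerivAt_right (hgc.intervalIntegrable _ _)
      hgc.stronglyMeasurable.stronglyMeasurableAtFilter hgc.continuousAt
  have hFc : Continuous F := by
    rw [continuous_iff_continuousAt]; exact fun s => (hF s).continuousAt
  set V : ℝ → ℝ := fun s => Real.exp (-(β₁ * s)) * (σ₀sq + α₀ * β₁ * F s) with hVdef
  set V' : ℝ → ℝ := fun s => -β₁ * V s + α₀ * β₁ * Real.exp (-(α₁ * Y s)) with hV'def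
  have hVc : Continuous V :=
    (Real.continuous_exp.comp (continuous_const.mul continuous_id).neg).mul
      (continuous_const.add (continuous_const.mul hFc))
  have hV'c : Continuous V' :=
    (continuous_const.mul hVc).add (continuous_const.mul
      (Real.continuous_exp.comp (continuous_const.mul hYcont).neg))
  have hV : ∀ s : ℝ, HasDerivAt V (V' s) s := by
    intro s
    have h1 : HasDerivAt (fun s : ℝ => Real.exp (-(β₁ * s)))
        (-β₁ * Real.exp (-(β₁ * s))) s := by
      have := (((hasDerivAt_id s).const_mul β₁).neg).exp
      simpa [mul_comm] using this
    have h2 : HasDerivAt (fun s : ℝ => σ₀sq + α₀ * β₁ * F s) (α₀ * β₁ * g s) s := by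
      exact ((hF s).const_mul (α₀ * β₁)).const_add σ₀sq
    have h3 := h1.mul h2
    refine h3.congr_deriv (Eq.symm ?_)
    rw [hV'def, hVdef, hgdef]
    simp only
    have hexp : Real.exp (-(β₁ * s)) * Real.exp (β₁ * s - α₁ * Y s)
        = Real.exp (-(α₁ * Y s)) := by
      rw [← Real.exp_add]; ring_nf
    linear_combination (-(α₀ * β₁)) * hexp
  have hσ_eq : ∀ s : ℝ, ficogarchSigmaSq α₀ α₁ β₁ σ₀sq Y s
      = V s * Real.exp (α₁ * Y s) := by
    intro s
    have hexp : Real.exp (-(β₁ * s - α₁ * Y s))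
        = Real.exp (-(β₁ * s)) * Real.exp (α₁ * Y s) := by
      rw [← Real.exp_add]; ring_nf
    simp only [ficogarchSigmaSq, hVdef, hFdef, hgdef]
    rw [hexp]
    ring
  have hibp := ibp_stieltjes Y hYcont α₁ V V' hV hV'c ht
  have hV0 : V 0 = σ₀sq := by
    rw [hVdef]
    simp [hFdef, intervalIntegral.integral_same]
  have hY0' : Real.exp (α₁ * Y 0) = 1 := by rw [hY0, mul_zero, Real.exp_zero]
  have hint1 : (∫ s in (0:ℝ)..t, V' s * Real.exp (α₁ * Y s))
      = -β₁ * ∫ s in (0:ℝ)..t, (ficogarchSigmaSq α₀ α₁ β₁ σ₀sq Y s - α₀) := by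
    rw [← intervalIntegral.integral_const_mul]
    refine intervalIntegral.integral_congr fun s _ => ?_
    rw [hσ_eq s, hV'def]
    simp only
    have hexp : Real.exp (-(α₁ * Y s)) * Real.exp (α₁ * Y s) = 1 := by
      rw [← Real.exp_add, neg_add_cancel, Real.exp_zero]
    linear_combination (α₀ * β₁) * hexp
  have hint2 : (∫ s in Set.Ioc 0 t, V s * Real.exp (α₁ * Y s) ∂Y.measure)
      = ∫ s in Set.Ioc 0 t, ficogarchSigmaSq α₀ α₁ β₁ σ₀sq Y s ∂Y.measure := by
    refine setIntegral_congr_fun measurableSet_Ioc fun s _ => (hσ_eq s).symm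
  rw [hσ_eq t, hibp, hV0, hY0', hint1, hint2]
  ring
end
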